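/- arXiv:1911.01153 — 7 statements merged into one kernel-verified Lean document; each statement's English description precedes it below -/
import Mathlib

section
/- Let m be a strictly positive integer and let u, v ∈ {0,1}^m be binary vectors with supp(u) ⊆ supp(v). Then Rel(C^u; p) ≤ Rel(C^v; p) for all p ∈ [0,1]. -/
/-- Reliability of the elementary networks: `g false p = p²` (series),
`g true p = 1 - (1-p)²` (parallel). -/
def g (b : Bool) (p : ℝ) : ℝ := if b then 1 - (1 - p)^2 else p^2

/-- Reliability polynomial of the composition `C^u`,
`Rel(C^u;p) = (g_{u_1} ∘ ⋯ ∘ g_{u_m})(p)`. -/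
def RelC (m : ℕ) (u : Fin m → Bool) (p : ℝ) : ℝ :=
  (List.finRange m).foldr (fun i q => g (u i) q) p

/-- Support of a binary vector. -/
def supp (m : ℕ) (u : Fin m → Bool) : Finset (Fin m) :=
  Finset.univ.filter (fun i => u i = true)

/-- Rank function `ρ(u) = ∑_{i ∈ supp u} i`, with 1-based index values. -/
def rho (m : ℕ) (u : Fin m → Bool) : ℕ :=
  ∑ i ∈ supp m u, ((i : ℕ) + 1)

/-- The support of `u`, sorted increasingly. -/
def sortedSupp (m : ℕ) (u : Fin m → Bool) : List (Fin m) :=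
  Finset.sort (supp m u) (· ≤ ·)

/-- The order `≼_H`: same Hamming weight and `s_i ≤ t_i` for every `i`. -/
def relH (m : ℕ) (u v : Fin m → Bool) : Prop :=
  (supp m u).card = (supp m v).card ∧
    ∀ (i : ℕ) (hu : i < (sortedSupp m u).length) (hv : i < (sortedSupp m v).length),
      (sortedSupp m u).get ⟨i, hu⟩ ≤ (sortedSupp m v).get ⟨i, hv⟩

/-- The order `≼_SH`. -/
def relSH (m : ℕ) (u v : Fin m → Bool) : Prop :=
  ((supp m u).card ≠ (supp m v).card ∧ supp m u ⊆ supp m v) ∨ relH m u v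

/-- The partial order generated by `≼_SH` (reflexive–transitive closure). -/
def leSH (m : ℕ) (u v : Fin m → Bool) : Prop :=
  Relation.ReflTransGen (relSH m) u v

lemma g_mem (b : Bool) {p : ℝ} (hp : p ∈ Set.Icc (0:ℝ) 1) :
    g b p ∈ Set.Icc (0:ℝ) 1 := by
  obtain ⟨h0, h1⟩ := hp
  cases b <;> simp only [g, if_true, if_false, Bool.false_eq_true] <;>
    constructor <;> nlinarith

lemma g_mono (b : Bool) {p q : ℝ} (hp : p ∈ Set.Icc (0:ℝ) 1)
    (hq : q ∈ Set.Icc (0:ℝ) 1) (hpq : p ≤ q) : g b p ≤ g b q := by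
  obtain ⟨h0, h1⟩ := hp
  obtain ⟨h0', h1'⟩ := hq
  cases b <;> simp only [g, if_true, if_false, Bool.false_eq_true] <;> nlinarith

lemma g_le (b c : Bool) (hbc : b = true → c = true) {p : ℝ}
    (hp : p ∈ Set.Icc (0:ℝ) 1) : g b p ≤ g c p := by
  obtain ⟨h0, h1⟩ := hp
  cases b
  · cases c
    · exact le_refl _
    · simp only [g, if_true, if_false, Bool.false_eq_true]; nlinarith
  · rw [hbc rfl]

lemma foldr_key (m : ℕ) (u v : Fin m → Bool)
    (huv : ∀ i, u i = true → v i = true) (l : List (Fin m)) {p : ℝ}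
    (hp : p ∈ Set.Icc (0:ℝ) 1) :
    l.foldr (fun i q => g (u i) q) p ∈ Set.Icc (0:ℝ) 1 ∧
      l.foldr (fun i q => g (u i) q) p ≤ l.foldr (fun i q => g (v i) q) p ∧
      l.foldr (fun i q => g (v i) q) p ∈ Set.Icc (0:ℝ) 1 := by
  induction l with
  | nil => exact ⟨hp, le_refl _, hp⟩
  | cons i l ih =>
    obtain ⟨hu, hle, hv⟩ := ih
    refine ⟨g_mem _ hu, ?_, g_mem _ hv⟩
    calc g (u i) (l.foldr (fun i q => g (u i) q) p)
        ≤ g (u i) (l.foldr (fun i q => g (v i) q) p) := g_mono _ hu hv hle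
      _ ≤ g (v i) (l.foldr (fun i q => g (v i) q) p) := g_le _ _ (huv i) hv

/-- if `supp u ⊆ supp v` then `Rel(C^u;p) ≤ Rel(C^v;p)` on `[0,1]`. -/
theorem rel_le_of_supp_subset (m : ℕ) (hm : 0 < m) (u v : Fin m → Bool)
    (h : supp m u ⊆ supp m v) :
    ∀ p ∈ Set.Icc (0:ℝ) 1, RelC m u p ≤ RelC m v p := by
  intro p hp
  have huv : ∀ i, u i = true → v i = true := by
    intro i hi
    have hmem : i ∈ supp m u := by simp [supp, hi]
    have := h hmem
    simpa [supp] using this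
  exact (foldr_key m u v huv (List.finRange m) hp).2.1
end

section
/- Let m be a strictly positive integer and let ⪯ be the partial order on {0,1}^m generated by ≼_SH. Then the poset ({0,1}^m, ⪯) is graded with rank function ρ(u) = ∑_{i ∈ supp(u)} i; that is, the all-zeros vector is the unique minimal element and has ρ = 0, and whenever v covers u (meaning u ⪯ v, u ≠ v, and there is no w with u ⪯ w ⪯ v and w ∉ {u,v}), one has ρ(v) = ρ(u) + 1. -/
namespace SH
variable {m : ℕ}

def cnt (S : Finset (Fin m)) (x : Fin m) : ℕ := (S.filter (· ≤ x)).card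
def cntlt (S : Finset (Fin m)) (x : Fin m) : ℕ := (S.filter (· < x)).card

lemma cnt_le_card (S : Finset (Fin m)) (x : Fin m) : cnt S x ≤ S.card :=
  Finset.card_filter_le _ _

lemma cnt_mono (S : Finset (Fin m)) {x y : Fin m} (h : x ≤ y) : cnt S x ≤ cnt S y := by
  apply Finset.card_le_card
  intro z hz
  simp only [Finset.mem_filter] at *
  exact ⟨hz.1, le_trans hz.2 h⟩

lemma cnt_eq_cntlt_add (S : Finset (Fin m)) (x : Fin m) :
    cnt S x = cntlt S x + (if x ∈ S then 1 else 0) := by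
  unfold cnt cntlt
  have h : S.filter (· ≤ x) = (S.filter (· < x)) ∪ (S.filter (· = x)) := by
    ext z; simp only [Finset.mem_filter, Finset.mem_union]
    constructor
    · rintro ⟨hz, hle⟩; rcases lt_or_eq_of_le hle with h | h
      · exact Or.inl ⟨hz, h⟩
      · exact Or.inr ⟨hz, h⟩
    · rintro (⟨hz, h⟩ | ⟨hz, h⟩); exact ⟨hz, le_of_lt h⟩; exact ⟨hz, le_of_eq h⟩
  rw [h, Finset.card_union_of_disjoint]
  · congr 1
    by_cases hx : x ∈ S
    · simp [hx, Finset.filter_eq', hx]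
    · simp [hx, Finset.filter_eq', hx]
  · rw [Finset.disjoint_left]
    intro z hz1 hz2
    simp only [Finset.mem_filter] at *
    exact absurd hz2.2 (ne_of_lt hz1.2)

lemma cntlt_zero (S : Finset (Fin m)) {x : Fin m} (hx : x.val = 0) : cntlt S x = 0 := by
  unfold cntlt
  rw [Finset.card_eq_zero, Finset.filter_eq_empty_iff]
  intro z _ h
  have := Fin.lt_def.mp h; omega

lemma cntlt_succ (S : Finset (Fin m)) {x y : Fin m} (h : y.val + 1 = x.val) :
    cntlt S x = cnt S y := by
  unfold cntlt cnt
  congr 1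
  ext z
  simp only [Finset.mem_filter, and_congr_right_iff]
  intro _
  rw [Fin.lt_def, Fin.le_def]
  omega

lemma cnt_inj {S T : Finset (Fin m)} (h : ∀ x, cnt S x = cnt T x) : S = T := by
  have key : ∀ x : Fin m, cntlt S x = cntlt T x := by
    intro x
    rcases Nat.eq_zero_or_pos x.val with h0 | h0
    · rw [cntlt_zero S h0, cntlt_zero T h0]
    · obtain ⟨j, hj⟩ := Nat.exists_eq_succ_of_ne_zero h0.ne'
      have hxm := x.isLt
      have hjm : j < m := by omega
      have hy : (⟨j, hjm⟩ : Fin m).val + 1 = x.val := by simp [hj]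
      rw [cntlt_succ S hy, cntlt_succ T hy, h]
  ext z
  have h1 := cnt_eq_cntlt_add S z
  have h2 := cnt_eq_cntlt_add T z
  rw [h z, key z] at h1
  by_cases hzS : z ∈ S <;> by_cases hzT : z ∈ T <;> simp [hzS, hzT] at * <;> omega

lemma cnt_top (S : Finset (Fin m)) {x : Fin m} (hx : x.val + 1 = m) : cnt S x = S.card := by
  unfold cnt
  congr 1
  rw [Finset.filter_eq_self]
  intro z _
  rw [Fin.le_def]
  have := z.isLt
  omega

lemma cnt_insert (S : Finset (Fin m)) {b : Fin m} (hb : b ∉ S) (x : Fin m) :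
    cnt (insert b S) x = cnt S x + if b ≤ x then 1 else 0 := by
  unfold cnt
  rw [Finset.filter_insert]
  by_cases h : b ≤ x
  · rw [if_pos h, if_pos h, Finset.card_insert_of_notMem (by simp [hb])]
  · rw [if_neg h, if_neg h, Nat.add_zero]

lemma cnt_erase (S : Finset (Fin m)) {a : Fin m} (ha : a ∈ S) (x : Fin m) :
    cnt S x = cnt (S.erase a) x + if a ≤ x then 1 else 0 := by
  have h1 : S = insert a (S.erase a) := (Finset.insert_erase ha).symm
  conv_lhs => rw [h1]
  exact cnt_insert _ (Finset.notMem_erase _ _) x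

lemma cnt_shift (S : Finset (Fin m)) {a b : Fin m} (ha : a ∈ S) (hb : b ∉ S) (x : Fin m) :
    cnt (insert b (S.erase a)) x + (if a ≤ x then 1 else 0)
      = cnt S x + (if b ≤ x then 1 else 0) := by
  rw [cnt_insert _ (fun h => hb (Finset.mem_of_mem_erase h)) x, cnt_erase S ha x]
  ring

lemma sort_get_le_iff (S : Finset (Fin m)) (i : ℕ)
    (h : i < (S.sort (· ≤ ·)).length) (x : Fin m) :
    (S.sort (· ≤ ·)).get ⟨i, h⟩ ≤ x ↔ i < cnt S x := by
  set L := S.sort (· ≤ ·) with hL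
  have hnd : L.Nodup := S.sort_nodup _
  have hs : L.Pairwise (· ≤ ·) := S.pairwise_sort _
  have hmem : ∀ z, z ∈ L ↔ z ∈ S := fun z => S.mem_sort _
  have hlen : L.length = S.card := S.length_sort _
  constructor
  · intro hle
    have hsub : (L.take (i+1)).toFinset ⊆ S.filter (· ≤ x) := by
      intro z hz
      rw [List.mem_toFinset] at hz
      obtain ⟨⟨j, hjlen⟩, hjt⟩ := List.mem_iff_get.mp hz
      have hjlt : j < i + 1 := by
        have := (List.length_take (i := i+1) (l := L)) ▸ hjlen
        omega
      have hjL : j < L.length := by omega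
      have hget : L.get ⟨j, hjL⟩ = z := by
        rw [← hjt]
        simp
      have hzle : z ≤ L.get ⟨i, h⟩ := by
        rw [← hget]
        exact hs.rel_get_of_le (by simp [Fin.le_def]; omega)
      rw [Finset.mem_filter]
      exact ⟨(hmem z).mp (List.mem_of_mem_take hz), le_trans hzle hle⟩
    have hcard : (L.take (i+1)).toFinset.card = i + 1 := by
      rw [List.toFinset_card_of_nodup (hnd.sublist (List.take_sublist _ _))]
      rw [List.length_take]
      omega
    have := Finset.card_le_card hsub
    rw [hcard] at this
    exact this
  · intro hcnt
    by_contra hlt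
    push_neg at hlt
    have hsub : S.filter (· ≤ x) ⊆ (L.take i).toFinset := by
      intro z hz
      rw [Finset.mem_filter] at hz
      obtain ⟨⟨j, hjL⟩, hjt⟩ := List.mem_iff_get.mp ((hmem z).mpr hz.1)
      have hji : j < i := by
        by_contra hji
        push_neg at hji
        have : L.get ⟨i, h⟩ ≤ L.get ⟨j, hjL⟩ := hs.rel_get_of_le (by simp [Fin.le_def]; omega)
        rw [hjt] at this
        exact absurd (le_trans this hz.2) (not_le_of_gt hlt)
      rw [List.mem_toFinset]
      have hjtake : j < (L.take i).length := by rw [List.length_take]; omega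
      have hz2 : (L.take i).get ⟨j, hjtake⟩ = z := by rw [← hjt]; simp
      rw [← hz2]
      exact List.get_mem _ _
    have := Finset.card_le_card hsub
    have h2 : (L.take i).toFinset.card ≤ i := by
      rw [List.toFinset_card_of_nodup (hnd.sublist (List.take_sublist _ _)), List.length_take]
      omega
    unfold cnt at hcnt
    omega

lemma mem_supp {u : Fin m → Bool} {i : Fin m} : i ∈ supp m u ↔ u i = true := by
  simp [supp]

lemma supp_inj {u v : Fin m → Bool} (h : supp m u = supp m v) : u = v := by
  funext i
  have h2 := Finset.ext_iff.mp h i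
  simp only [mem_supp] at h2
  cases hui : u i <;> cases hvi : v i <;> simp_all

lemma supp_shift (u : Fin m → Bool) (a b : Fin m) :
    supp m (Function.update (Function.update u a false) b true)
      = insert b ((supp m u).erase a) := by
  ext i
  simp only [mem_supp, Finset.mem_insert, Finset.mem_erase]
  rcases eq_or_ne i b with rfl | hib
  · simp [Function.update_self]
  · rw [Function.update_of_ne hib]
    rcases eq_or_ne i a with rfl | hia
    · simp [Function.update_self, hib]
    · rw [Function.update_of_ne hia]
      simp [hib, hia, mem_supp]

lemma supp_set_true (u : Fin m → Bool) (b : Fin m) :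
    supp m (Function.update u b true) = insert b (supp m u) := by
  ext i
  simp only [mem_supp, Finset.mem_insert]
  rcases eq_or_ne i b with rfl | hib
  · simp [Function.update_self]
  · rw [Function.update_of_ne hib]
    simp [hib, mem_supp]

lemma relH_iff (u v : Fin m → Bool) :
    relH m u v ↔ ((supp m u).card = (supp m v).card ∧
      ∀ x, cnt (supp m v) x ≤ cnt (supp m u) x) := by
  constructor
  · rintro ⟨hc, hg⟩
    refine ⟨hc, fun x => ?_⟩
    set k := cnt (supp m v) x with hk
    rcases Nat.eq_zero_or_pos k with h0 | h0
    · omega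
    have hkv : k ≤ (supp m v).card := cnt_le_card _ _
    have hv' : k - 1 < (Finset.sort (supp m v) (· ≤ ·)).length := by
      rw [Finset.length_sort]; omega
    have hu' : k - 1 < (Finset.sort (supp m u) (· ≤ ·)).length := by
      rw [Finset.length_sort, hc]; omega
    have ht : (Finset.sort (supp m v) (· ≤ ·)).get ⟨k - 1, hv'⟩ ≤ x := by
      rw [sort_get_le_iff (supp m v) (k-1) hv' x]; omega
    have hs0 := hg (k-1) hu' hv'
    have hs : (Finset.sort (supp m u) (· ≤ ·)).get ⟨k - 1, hu'⟩ ≤ x := le_trans hs0 ht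
    rw [sort_get_le_iff (supp m u) (k-1) hu' x] at hs
    omega
  · rintro ⟨hc, hcnt⟩
    refine ⟨hc, fun i hu hv => ?_⟩
    have hu' : i < (Finset.sort (supp m u) (· ≤ ·)).length := hu
    have hv' : i < (Finset.sort (supp m v) (· ≤ ·)).length := hv
    show (Finset.sort (supp m u) (· ≤ ·)).get ⟨i, hu'⟩
        ≤ (Finset.sort (supp m v) (· ≤ ·)).get ⟨i, hv'⟩
    set t := (Finset.sort (supp m v) (· ≤ ·)).get ⟨i, hv'⟩ with hteq
    rw [sort_get_le_iff (supp m u) i hu' t]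
    have h2 : i < cnt (supp m v) t := by
      rw [← sort_get_le_iff (supp m v) i hv' t]
    exact lt_of_lt_of_le h2 (hcnt t)

lemma shift_up (u : Fin m → Bool) {a a' : Fin m} (haS : a ∈ supp m u)
    (ha'S : a' ∉ supp m u) (hval : a.val + 1 = a'.val) :
    relH m u (Function.update (Function.update u a false) a' true)
    ∧ rho m (Function.update (Function.update u a false) a' true) = rho m u + 1
    ∧ supp m (Function.update (Function.update u a false) a' true)
        = insert a' ((supp m u).erase a) := by
  set w := Function.update (Function.update u a false) a' true with hw
  have hsw : supp m w = insert a' ((supp m u).erase a) := supp_shift u a a'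
  have ha'e : a' ∉ (supp m u).erase a := fun h => ha'S (Finset.mem_of_mem_erase h)
  have hcard : (supp m w).card = (supp m u).card := by
    rw [hsw, Finset.card_insert_of_notMem ha'e, Finset.card_erase_of_mem haS]
    have : 0 < (supp m u).card := Finset.card_pos.mpr ⟨a, haS⟩
    omega
  have haa' : a ≤ a' := by rw [Fin.le_def]; omega
  refine ⟨?_, ?_, hsw⟩
  · rw [relH_iff]
    refine ⟨hcard.symm, fun x => ?_⟩
    have heq := cnt_shift (supp m u) haS ha'S x
    rw [← hsw] at heq
    by_cases h1 : a ≤ x <;> by_cases h2 : a' ≤ x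
    · simp [h1, h2] at heq; omega
    · simp [h1, h2] at heq; omega
    · exact absurd (le_trans haa' h2) h1
    · simp [h1, h2] at heq; omega
  · unfold rho
    rw [hsw, Finset.sum_insert ha'e]
    have hsum : (∑ x ∈ (supp m u).erase a, ((x : ℕ) + 1)) + ((a : ℕ) + 1)
        = ∑ x ∈ supp m u, ((x : ℕ) + 1) := Finset.sum_erase_add (supp m u) _ haS
    omega


lemma exists_step : ∀ (n : ℕ) (u v : Fin m → Bool), rho m v = n → relSH m u v → u ≠ v →
    ∃ w, rho m w = rho m u + 1 ∧ leSH m u w ∧ leSH m w v := by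
  intro n
  induction n using Nat.strong_induction_on with
  | _ n ih =>
  intro u v hn h hne
  rcases h with ⟨hc, hsub⟩ | hH
  · -- subset / different cardinality case
    have hST : supp m u ≠ supp m v := fun e => hc (by rw [e])
    have hdiff : (supp m v \ supp m u).Nonempty := by
      rw [Finset.sdiff_nonempty]
      exact fun h2 => hST (Finset.Subset.antisymm hsub h2)
    set t := (supp m v \ supp m u).min' hdiff with htdef
    have htmem := (supp m v \ supp m u).min'_mem hdiff
    rw [Finset.mem_sdiff] at htmem
    obtain ⟨htT, htS⟩ := htmem
    rw [← htdef] at htT htS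
    rcases Nat.eq_zero_or_pos t.val with ht0 | ht0
    · -- t has value 0 : just set bit t
      set w := Function.update u t true with hwdef
      have hsw : supp m w = insert t (supp m u) := supp_set_true u t
      have hcw : (supp m w).card = (supp m u).card + 1 := by
        rw [hsw, Finset.card_insert_of_notMem htS]
      have hwsubv : supp m w ⊆ supp m v := by
        rw [hsw]; exact Finset.insert_subset htT hsub
      refine ⟨w, ?_, ?_, ?_⟩
      · unfold rho
        rw [hsw, Finset.sum_insert htS]
        omega
      · exact Relation.ReflTransGen.single (Or.inl ⟨by omega, by rw [hsw]; exact Finset.subset_insert _ _⟩)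
      · by_cases hcwv : (supp m w).card = (supp m v).card
        · have he : supp m w = supp m v :=
            Finset.eq_of_subset_of_card_le hwsubv (le_of_eq hcwv.symm)
          rw [supp_inj he]
          exact Relation.ReflTransGen.refl
        · exact Relation.ReflTransGen.single (Or.inl ⟨hcwv, hwsubv⟩)
    · -- t.val > 0
      have htm := t.isLt
      set tp : Fin m := ⟨t.val - 1, by omega⟩ with htpdef
      have htpval : tp.val + 1 = t.val := by simp [htpdef]; omega
      by_cases htpS : tp ∈ supp m u
      · -- shift tp up to t inside u
        obtain ⟨hrelHuw, hrho, hsw⟩ := shift_up u htpS htS htpval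
        refine ⟨_, hrho, Relation.ReflTransGen.single (Or.inr hrelHuw), ?_⟩
        refine Relation.ReflTransGen.single (Or.inl ⟨?_, ?_⟩)
        · have := hrelHuw.1
          omega
        · rw [hsw]
          exact Finset.insert_subset htT ((Finset.erase_subset _ _).trans hsub)
      · -- tp not in u, hence not in v either; shift t down to tp inside v
        have htpT : tp ∉ supp m v := by
          intro hmem
          have h2 : tp ∈ supp m v \ supp m u := Finset.mem_sdiff.mpr ⟨hmem, htpS⟩
          have h3 := Finset.min'_le _ tp h2
          rw [← htdef, Fin.le_def] at h3
          omega
        set v' := Function.update (Function.update v t false) tp true with hv'def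
        have hsv' : supp m v' = insert tp ((supp m v).erase t) := supp_shift v t tp
        have htpe : tp ∉ (supp m v).erase t := fun h => htpT (Finset.mem_of_mem_erase h)
        have hcv' : (supp m v').card = (supp m v).card := by
          rw [hsv', Finset.card_insert_of_notMem htpe, Finset.card_erase_of_mem htT]
          have : 0 < (supp m v).card := Finset.card_pos.mpr ⟨t, htT⟩
          omega
        have htpt : tp ≤ t := by rw [Fin.le_def]; omega
        have hrelHv'v : relH m v' v := by
          rw [relH_iff]
          refine ⟨hcv', fun x => ?_⟩
          have heq := cnt_shift (supp m v) htT htpT x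
          rw [← hsv'] at heq
          by_cases h1 : t ≤ x <;> by_cases h2 : tp ≤ x
          · simp [h1, h2] at heq; omega
          · exact absurd (le_trans htpt h1) h2
          · simp [h1, h2] at heq; omega
          · simp [h1, h2] at heq; omega
        have hrhov' : rho m v' + 1 = rho m v := by
          unfold rho
          rw [hsv', Finset.sum_insert htpe]
          have hsum : (∑ x ∈ (supp m v).erase t, ((x : ℕ) + 1)) + ((t : ℕ) + 1)
              = ∑ x ∈ supp m v, ((x : ℕ) + 1) := Finset.sum_erase_add (supp m v) _ htT
          omega
        have hrel : relSH m u v' := by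
          refine Or.inl ⟨by omega, ?_⟩
          rw [hsv']
          intro z hz
          refine Finset.mem_insert_of_mem (Finset.mem_erase.mpr ⟨?_, hsub hz⟩)
          rintro rfl
          exact htS hz
        have hne' : u ≠ v' := by
          intro e
          apply htpS
          rw [e, mem_supp]
          have : tp ∈ supp m v' := by rw [hsv']; exact Finset.mem_insert_self _ _
          exact mem_supp.mp this
        obtain ⟨w, h1, h2, h3⟩ := ih (rho m v') (by omega) u v' rfl hrel hne'
        exact ⟨w, h1, h2, h3.trans (Relation.ReflTransGen.single (Or.inr hrelHv'v))⟩
  · -- relH case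
    rw [relH_iff] at hH
    obtain ⟨hc, hcnt⟩ := hH
    have hST : supp m u ≠ supp m v := fun e => hne (supp_inj e)
    have hA : (Finset.univ.filter (fun y => cnt (supp m v) y < cnt (supp m u) y)).Nonempty := by
      by_contra hA0
      rw [Finset.not_nonempty_iff_eq_empty, Finset.filter_eq_empty_iff] at hA0
      refine hST (cnt_inj fun x => ?_)
      have h1 := hcnt x
      have h2 := hA0 (Finset.mem_univ x)
      simp only [not_lt] at h2
      omega
    obtain ⟨amax, hamax_lt, hmax⟩ :
        ∃ amax, cnt (supp m v) amax < cnt (supp m u) amax ∧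
          ∀ y, cnt (supp m v) y < cnt (supp m u) y → y ≤ amax := by
      refine ⟨(Finset.univ.filter
          (fun y => cnt (supp m v) y < cnt (supp m u) y)).max' hA, ?_, ?_⟩
      · have h0 := Finset.max'_mem _ hA
        rw [Finset.mem_filter] at h0
        exact h0.2
      · intro y hy
        exact Finset.le_max' _ y (Finset.mem_filter.mpr ⟨Finset.mem_univ y, hy⟩)
    have htop : amax.val + 1 < m := by
      by_contra htop
      have he : amax.val + 1 = m := by have := amax.isLt; omega
      have e1 := cnt_top (supp m u) he
      have e2 := cnt_top (supp m v) he
      omega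
    have hB : ((supp m u).filter (fun z => z ≤ amax)).Nonempty := by
      rw [← Finset.card_pos]
      have h3 : 0 < cnt (supp m u) amax := by omega
      exact h3
    obtain ⟨a, haS, haam, hamax'⟩ :
        ∃ a, a ∈ supp m u ∧ a ≤ amax ∧ ∀ z ∈ supp m u, z ≤ amax → z ≤ a := by
      refine ⟨((supp m u).filter (fun z => z ≤ amax)).max' hB, ?_, ?_, ?_⟩
      · have h0 := Finset.max'_mem _ hB
        rw [Finset.mem_filter] at h0
        exact h0.1
      · have h0 := Finset.max'_mem _ hB
        rw [Finset.mem_filter] at h0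
        exact h0.2
      · intro z hz hzle
        refine Finset.le_max' ((supp m u).filter (fun w => w ≤ amax)) z ?_
        rw [Finset.mem_filter]
        exact ⟨hz, hzle⟩
    have hcnta : cnt (supp m u) a = cnt (supp m u) amax := by
      unfold cnt
      congr 1
      apply Finset.Subset.antisymm
      · intro z hz
        rw [Finset.mem_filter] at hz ⊢
        exact ⟨hz.1, le_trans hz.2 haam⟩
      · intro z hz
        rw [Finset.mem_filter] at hz ⊢
        exact ⟨hz.1, hamax' z hz.1 hz.2⟩
    have hTa : cnt (supp m v) a < cnt (supp m u) a := by
      have := cnt_mono (supp m v) haam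
      omega
    have haval : a.val + 1 < m := by
      have h4 : a.val ≤ amax.val := Fin.le_def.mp haam
      omega
    obtain ⟨a', ha'val⟩ : ∃ a' : Fin m, a.val + 1 = a'.val := ⟨⟨a.val + 1, haval⟩, rfl⟩
    have haa' : a ≤ a' := by rw [Fin.le_def]; omega
    have ha'S : a' ∉ supp m u := by
      by_cases hle : a' ≤ amax
      · intro hmem
        have h5 : a' ≤ a := hamax' a' hmem hle
        rw [Fin.le_def] at h5
        omega
      · intro hmem
        have h3 : ¬ (cnt (supp m v) a' < cnt (supp m u) a') :=
          fun hlt => hle (hmax a' hlt)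
        have h4 : cnt (supp m u) a' = cnt (supp m u) a + 1 := by
          rw [cnt_eq_cntlt_add (supp m u) a', cntlt_succ (supp m u) ha'val]
          simp [hmem]
        have h5 : cnt (supp m v) a' ≤ cnt (supp m v) a + 1 := by
          rw [cnt_eq_cntlt_add (supp m v) a', cntlt_succ (supp m v) ha'val]
          split_ifs <;> omega
        omega
    obtain ⟨hrelHuw, hrho, hsw⟩ := shift_up u haS ha'S ha'val
    refine ⟨_, hrho, Relation.ReflTransGen.single (Or.inr hrelHuw), ?_⟩
    refine Relation.ReflTransGen.single (Or.inr ?_)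
    rw [relH_iff]
    have hcw := hrelHuw.1
    refine ⟨by omega, fun x => ?_⟩
    have heq := cnt_shift (supp m u) haS ha'S x
    rw [← hsw] at heq
    by_cases h1 : a ≤ x <;> by_cases h2 : a' ≤ x
    · have := hcnt x; simp [h1, h2] at heq; omega
    · have hxa : x = a := by
        rw [Fin.le_def] at h1 h2
        apply Fin.ext
        omega
      subst hxa
      simp [h1, h2] at heq
      omega
    · exact absurd (le_trans haa' h2) h1
    · have := hcnt x; simp [h1, h2] at heq; omega


lemma exists_step_rel (u v : Fin m → Bool) (h : relSH m u v) (hne : u ≠ v) :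
    ∃ w, rho m w = rho m u + 1 ∧ leSH m u w ∧ leSH m w v :=
  exists_step (rho m v) u v rfl h hne

lemma exists_step_le (u v : Fin m → Bool) (h : leSH m u v) :
    u ≠ v → ∃ w, rho m w = rho m u + 1 ∧ leSH m u w ∧ leSH m w v := by
  induction h using Relation.ReflTransGen.head_induction_on with
  | refl => exact fun hne => absurd rfl hne
  | @head a c hrel hrest ih =>
    intro hne
    rcases eq_or_ne a c with rfl | hac
    · exact ih hne
    · obtain ⟨w, h1, h2, h3⟩ := exists_step_rel a c hrel hac
      exact ⟨w, h1, h2, h3.trans hrest⟩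

lemma supp_zero : supp m (fun _ => false) = (∅ : Finset (Fin m)) := by
  simp [supp]

lemma eq_zero_of_relSH_zero {a : Fin m → Bool} (h : relSH m a (fun _ => false)) :
    a = fun _ => false := by
  rcases h with ⟨hc, hsub⟩ | ⟨hc, _⟩
  · rw [supp_zero] at hsub
    have h1 : supp m a = ∅ := Finset.subset_empty.mp hsub
    rw [h1, supp_zero] at hc
    exact absurd rfl hc
  · rw [supp_zero, Finset.card_empty, Finset.card_eq_zero] at hc
    apply supp_inj
    rw [hc, supp_zero]

end SH


/-- the poset `({0,1}^m, ⪯)` generated by `≼_SH` is graded with rank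
function `ρ(u) = ∑_{i ∈ supp u} i`: the all-zeros vector is the unique minimal
element and has rank `0`, and whenever `v` covers `u` one has `ρ(v) = ρ(u) + 1`. -/
theorem poset_graded (m : ℕ) (hm : 0 < m) :
    rho m (fun _ => false) = 0 ∧
    (∀ w : Fin m → Bool, leSH m w (fun _ => false) → w = fun _ => false) ∧
    (∀ u : Fin m → Bool, (∀ w : Fin m → Bool, leSH m w u → w = u) →
      u = fun _ => false) ∧
    (∀ u v : Fin m → Bool, leSH m u v → u ≠ v →
      (∀ w : Fin m → Bool, leSH m u w → leSH m w v → w = u ∨ w = v) →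
      rho m v = rho m u + 1) := by
  refine ⟨?_, ?_, ?_, ?_⟩
  · rw [rho, SH.supp_zero, Finset.sum_empty]
  · intro w h
    have main : ∀ b : Fin m → Bool, leSH m w b → b = (fun _ => false) → w = fun _ => false := by
      intro b hb
      induction hb with
      | refl => exact fun h0 => h0
      | tail hab hbc ihab => exact fun h0 => ihab (SH.eq_zero_of_relSH_zero (h0 ▸ hbc))
    exact main _ h rfl
  · intro u hmin
    by_contra hu
    have hsuppne : supp m u ≠ ∅ := by
      intro h0
      apply hu
      apply SH.supp_inj
      rw [h0, SH.supp_zero]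
    have hstep : relSH m (fun _ => false) u := by
      refine Or.inl ⟨?_, ?_⟩
      · rw [SH.supp_zero, Finset.card_empty]
        exact fun h0 => hsuppne (Finset.card_eq_zero.mp h0.symm)
      · rw [SH.supp_zero]
        exact Finset.empty_subset _
    have := hmin _ (Relation.ReflTransGen.single hstep)
    exact hu this.symm
  · intro u v hle hne hcov
    obtain ⟨w, h1, h2, h3⟩ := SH.exists_step_le u v hle hne
    rcases hcov w h2 h3 with rfl | rfl
    · omega
    · exact h1
end

section
/- Let m be a strictly positive integer and for an integer i let #P_i denote the number of subsets S ⊆ {1,…,m} with ∑_{j∈S} j = i. Then the sequence of rank numbers is unimodal up to the middle: for all integers i, j with 0 ≤ i ≤ j and 2j ≤ m(m+1)/2, one has #P_i ≤ #P_j. -/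
open Matrix Finset

namespace RankUni

variable {m : ℕ}

abbrev BS (m : ℕ) := Finset (Fin m)

noncomputable def ins (a : Fin m) : Matrix (BS m) (BS m) ℝ :=
  fun T S => if a ∉ S ∧ T = insert a S then 1 else 0

noncomputable def del (a : Fin m) : Matrix (BS m) (BS m) ℝ := (ins a)ᵀ

lemma sum_ite_eq_of_iff {Q : BS m → Prop} [DecidablePred Q] {c : BS m} {p : Prop} [Decidable p]
    (h : ∀ R, Q R ↔ (R = c ∧ p)) (x : ℝ) :
    (∑ R : BS m, if Q R then x else 0) = if p then x else 0 := by
  simp only [h, ite_and]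
  rw [Finset.sum_ite_eq' Finset.univ c (fun _ => if p then x else 0)]
  simp

lemma ins_mul_del (a b : Fin m) (hab : a ≠ b) :
    ins a * del b = fun T S => if b ∈ S ∧ a ∉ S ∧ T = insert a (S.erase b) then 1 else 0 := by
  ext T S
  rw [Matrix.mul_apply]
  simp only [ins, del, Matrix.transpose_apply, ite_mul, one_mul, zero_mul, ← ite_and]
  rw [sum_ite_eq_of_iff (c := S.erase b) (p := b ∈ S ∧ a ∉ S ∧ T = insert a (S.erase b))]
  intro R
  constructor
  · rintro ⟨⟨haR, hT⟩, hbR, hS⟩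
    subst hS
    refine ⟨by rw [Finset.erase_insert hbR], Finset.mem_insert_self _ _, ?_, ?_⟩
    · simp only [Finset.mem_insert, not_or] at *; tauto
    · rw [Finset.erase_insert hbR]; exact hT
  · rintro ⟨hR, hbS, haS, hT⟩
    subst hR
    refine ⟨⟨?_, hT⟩, ?_, (Finset.insert_erase hbS).symm⟩
    · simp [Finset.mem_erase]; tauto
    · simp [Finset.mem_erase]

lemma ins_mul_ins_self (a : Fin m) : ins a * ins a = 0 := by
  ext T S
  rw [Matrix.mul_apply]
  simp only [ins, ite_mul, one_mul, zero_mul, ← ite_and]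
  rw [sum_ite_eq_of_iff (c := insert a S) (p := False)]
  · simp
  · intro R
    constructor
    · rintro ⟨⟨haR, _⟩, _, hR⟩
      exact absurd (hR ▸ Finset.mem_insert_self a S) haR
    · rintro ⟨_, h⟩; exact h.elim

lemma del_mul_del_self (a : Fin m) : del a * del a = 0 := by
  have := congrArg Matrix.transpose (ins_mul_ins_self a)
  rwa [Matrix.transpose_mul, Matrix.transpose_zero] at this

lemma comm_ins_ins {a b : Fin m} (hab : a ≠ b) : Commute (ins a) (ins b) := by
  unfold Commute SemiconjBy
  ext T S
  rw [Matrix.mul_apply, Matrix.mul_apply]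
  simp only [ins, ite_mul, one_mul, zero_mul, ← ite_and]
  rw [sum_ite_eq_of_iff (c := insert b S)
      (p := a ∉ S ∧ b ∉ S ∧ T = insert a (insert b S)), sum_ite_eq_of_iff (c := insert a S)
      (p := a ∉ S ∧ b ∉ S ∧ T = insert a (insert b S))]
  · intro R
    constructor
    · rintro ⟨⟨hbR, hT⟩, haS, hR⟩
      subst hR
      simp only [Finset.mem_insert, not_or] at hbR
      exact ⟨rfl, haS, hbR.2, by rw [hT]; apply Finset.insert_comm⟩
    · rintro ⟨hR, haS, hbS, hT⟩
      subst hR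
      refine ⟨⟨?_, by rw [hT]; apply Finset.insert_comm⟩, haS, rfl⟩
      simp only [Finset.mem_insert, not_or]
      exact ⟨hab.symm, hbS⟩
  · intro R
    constructor
    · rintro ⟨⟨haR, hT⟩, hbS, hR⟩
      subst hR
      simp only [Finset.mem_insert, not_or] at haR
      exact ⟨rfl, haR.2, hbS, hT⟩
    · rintro ⟨hR, haS, hbS, hT⟩
      subst hR
      refine ⟨⟨?_, hT⟩, hbS, rfl⟩
      simp only [Finset.mem_insert, not_or]
      exact ⟨hab, haS⟩

lemma comm_del_del {a b : Fin m} (hab : a ≠ b) : Commute (del a) (del b) := by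
  have := congrArg Matrix.transpose (comm_ins_ins hab.symm).eq
  rwa [Matrix.transpose_mul, Matrix.transpose_mul] at this

lemma del_mul_ins (a b : Fin m) (hab : a ≠ b) :
    del b * ins a = fun T S => if b ∈ S ∧ a ∉ S ∧ T = insert a (S.erase b) then 1 else 0 := by
  ext T S
  rw [Matrix.mul_apply]
  simp only [ins, del, Matrix.transpose_apply, ite_mul, one_mul, zero_mul, ← ite_and]
  rw [sum_ite_eq_of_iff (c := insert a S)
      (p := b ∈ S ∧ a ∉ S ∧ T = insert a (S.erase b))]
  intro R
  constructor
  · rintro ⟨⟨hbT, hR⟩, haS, hRS⟩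
    subst hRS
    have hbS : b ∈ S := by
      have : b ∈ insert a S := hR ▸ Finset.mem_insert_self b T
      simp only [Finset.mem_insert] at this
      rcases this with h | h
      · exact absurd h.symm hab
      · exact h
    refine ⟨rfl, hbS, haS, ?_⟩
    have h1 : T = (insert b T).erase b := (Finset.erase_insert hbT).symm
    rw [h1, ← hR, Finset.erase_insert_of_ne hab]
  · rintro ⟨hR, hbS, haS, hT⟩
    subst hR
    refine ⟨⟨?_, ?_⟩, haS, rfl⟩
    · rw [hT]; simp [hab.symm]
    · rw [hT, Finset.insert_comm, Finset.insert_erase hbS]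

lemma comm_ins_del {a b : Fin m} (hab : a ≠ b) : Commute (ins a) (del b) := by
  unfold Commute SemiconjBy
  rw [ins_mul_del a b hab, del_mul_ins a b hab]

lemma comm_del_ins {a b : Fin m} (hab : a ≠ b) : Commute (del a) (ins b) :=
  (comm_ins_del hab.symm).symm

lemma del_mul_ins_self (a : Fin m) :
    del a * ins a = Matrix.diagonal (fun S => if a ∈ S then 0 else 1) := by
  ext T S
  rw [Matrix.mul_apply]
  simp only [ins, del, Matrix.transpose_apply, ite_mul, one_mul, zero_mul, ← ite_and]
  rw [sum_ite_eq_of_iff (c := insert a S) (p := a ∉ S ∧ T = S)]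
  · rw [Matrix.diagonal_apply]
    by_cases h : T = S
    · subst h; by_cases h2 : a ∈ T <;> simp [h2]
    · simp [h, fun h' : a ∉ S ∧ T = S => h h'.2]
  · intro R
    constructor
    · rintro ⟨⟨haT, hR⟩, haS, hR2⟩
      have : insert a T = insert a S := by rw [← hR, hR2]
      have hTS : T = S := by
        rw [← Finset.erase_insert haT, ← Finset.erase_insert haS, this]
      exact ⟨hR2, haS, hTS⟩
    · rintro ⟨hR, haS, hTS⟩
      subst hTS; exact ⟨⟨haS, hR⟩, haS, hR⟩

lemma ins_mul_del_self (a : Fin m) :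
    ins a * del a = Matrix.diagonal (fun S => if a ∈ S then 1 else 0) := by
  ext T S
  rw [Matrix.mul_apply]
  simp only [ins, del, Matrix.transpose_apply, ite_mul, one_mul, zero_mul, ← ite_and]
  rw [sum_ite_eq_of_iff (c := S.erase a) (p := a ∈ S ∧ T = S)]
  · rw [Matrix.diagonal_apply]
    by_cases h : T = S
    · subst h; by_cases h2 : a ∈ T <;> simp [h2]
    · simp [h, fun h' : a ∈ S ∧ T = S => h h'.2]
  · intro R
    constructor
    · rintro ⟨⟨haR, hT⟩, haR2, hS⟩
      have haS : a ∈ S := hS ▸ Finset.mem_insert_self a R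
      have hRc : R = S.erase a := by rw [hS, Finset.erase_insert haR2]
      exact ⟨hRc, haS, by rw [hT, hRc, Finset.insert_erase haS, hS]⟩
    · rintro ⟨hR, haS, hTS⟩
      subst hR
      refine ⟨⟨Finset.notMem_erase a S, ?_⟩, Finset.notMem_erase a S,
        (Finset.insert_erase haS).symm⟩
      rw [hTS, Finset.insert_erase haS]


lemma move_mul_move (a b : Fin m) (hab : a ≠ b) :
    (ins a * del b) * (ins b * del a) =
      Matrix.diagonal (fun S => if a ∈ S ∧ b ∉ S then 1 else 0) := by
  rw [ins_mul_del a b hab, ins_mul_del b a hab.symm]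
  ext T S
  erw [Matrix.mul_apply]
  simp only [ite_mul, one_mul, zero_mul, ← ite_and]
  rw [sum_ite_eq_of_iff (c := insert b (S.erase a)) (p := a ∈ S ∧ b ∉ S ∧ T = S)]
  · rw [Matrix.diagonal_apply]
    by_cases h : T = S
    · subst h; by_cases h2 : a ∈ T <;> by_cases h3 : b ∈ T <;> simp [h2, h3]
    · simp [h, fun h' : a ∈ S ∧ b ∉ S ∧ T = S => h h'.2.2]
  · intro R
    constructor
    · rintro ⟨⟨hbR, haR, hT⟩, haS, hbS, hR⟩
      subst hR
      have he : (insert b (S.erase a)).erase b = S.erase a :=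
        Finset.erase_insert (by simp [hbS])
      refine ⟨rfl, haS, hbS, ?_⟩
      rw [hT, he, Finset.insert_erase haS]
    · rintro ⟨hR, haS, hbS, hT⟩
      subst hR
      have he : (insert b (S.erase a)).erase b = S.erase a :=
        Finset.erase_insert (by simp [hbS])
      refine ⟨⟨Finset.mem_insert_self b _, ?_, ?_⟩, haS, hbS, rfl⟩
      · simp [hab, Finset.mem_erase]
      · rw [he, Finset.insert_erase haS, hT]

lemma prod4_zero_del (x y b : Fin m) (h : b ≠ y) :
    (ins x * del b) * (ins y * del b) = 0 := by
  calc (ins x * del b) * (ins y * del b)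
      = ins x * (del b * (ins y * del b)) := by rw [mul_assoc]
    _ = ins x * ((del b * ins y) * del b) := by rw [← mul_assoc (del b)]
    _ = ins x * ((ins y * del b) * del b) := by rw [(comm_del_ins h).eq]
    _ = ins x * (ins y * (del b * del b)) := by rw [mul_assoc]
    _ = 0 := by rw [del_mul_del_self, mul_zero, mul_zero]

lemma prod4_zero_ins (a x y : Fin m) (h : x ≠ a) :
    (ins a * del x) * (ins a * del y) = 0 := by
  calc (ins a * del x) * (ins a * del y)
      = ins a * (del x * (ins a * del y)) := by rw [mul_assoc]
    _ = ins a * ((del x * ins a) * del y) := by rw [← mul_assoc (del x)]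
    _ = ins a * ((ins a * del x) * del y) := by rw [(comm_del_ins h).eq]
    _ = ins a * (ins a * (del x * del y)) := by rw [mul_assoc]
    _ = (ins a * ins a) * (del x * del y) := by rw [← mul_assoc]
    _ = 0 := by rw [ins_mul_ins_self, zero_mul]

lemma comm_movemove {a b c d : Fin m} (hac : a ≠ c) (had : a ≠ d) (hbc : b ≠ c) (hbd : b ≠ d) :
    Commute (ins a * del b) (ins c * del d) :=
  Commute.mul_left ((comm_ins_ins hac).mul_right (comm_ins_del had))
    ((comm_del_ins hbc).mul_right (comm_del_del hbd))


section U

variable (m : ℕ)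

noncomputable def gco : ℝ := Real.sqrt (m * (m + 1) / 2)
noncomputable def fco (v : ℕ) : ℝ := Real.sqrt (((m : ℝ) - v) * ((m : ℝ) + v + 1))

def s1 (k : Fin (m - 1)) : Fin m := ⟨k.1, by have := k.isLt; omega⟩
def s2 (k : Fin (m - 1)) : Fin m := ⟨k.1 + 1, by have := k.isLt; omega⟩

noncomputable def uop (k : Fin (m - 1)) : Matrix (BS m) (BS m) ℝ :=
  ins (s2 m k) * del (s1 m k)

noncomputable def Yop : Matrix (BS m) (BS m) ℝ :=
  ∑ k : Fin (m - 1), fco m (k.1 + 1) • uop m k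

lemma s1_ne_s2 (k : Fin (m - 1)) : s1 m k ≠ s2 m k := by
  simp [s1, s2, Fin.ext_iff]

lemma uopT (k : Fin (m - 1)) : (uop m k)ᵀ = ins (s1 m k) * del (s2 m k) := by
  rw [uop, Matrix.transpose_mul, del, del, Matrix.transpose_transpose]

lemma YopT : (Yop m)ᵀ = ∑ k : Fin (m - 1), fco m (k.1 + 1) • (ins (s1 m k) * del (s2 m k)) := by
  rw [Yop, Matrix.transpose_sum]
  exact Finset.sum_congr rfl fun k _ => by rw [Matrix.transpose_smul, uopT]

lemma comm_uopT_uop {k j : Fin (m - 1)} (hkj : k ≠ j) :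
    (uop m k)ᵀ * uop m j = uop m j * (uop m k)ᵀ := by
  rw [uopT, uop]
  have hval : k.1 ≠ j.1 := fun h => hkj (Fin.ext h)
  rcases Nat.lt_or_ge k.1 j.1 with h | h
  · rcases Nat.eq_or_lt_of_le h with he | hlt
    · -- j = k + 1 : s1 j = s2 k
      have e : s1 m j = s2 m k := by simp [s1, s2, Fin.ext_iff, ← he]
      rw [e]
      rw [prod4_zero_del _ _ _ (by simp [s2, Fin.ext_iff] <;> omega),
        prod4_zero_del _ _ _ (by simp [s1, s2, Fin.ext_iff] <;> omega)]
    · -- k.1 + 1 < j.1 : all distinct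
      exact (comm_movemove (by simp [s1, s2, Fin.ext_iff] <;> omega)
        (by simp [s1, Fin.ext_iff] <;> omega) (by simp [s1, s2, Fin.ext_iff] <;> omega)
        (by simp [s2, s1, Fin.ext_iff] <;> omega)).eq
  · rcases Nat.eq_or_lt_of_le h with he | hlt
    · exact absurd he.symm hval
    · rcases Nat.eq_or_lt_of_le hlt with he2 | hlt2
      · -- k = j + 1 : s1 k = s2 j
        have e : s1 m k = s2 m j := by simp [s1, s2, Fin.ext_iff] <;> omega
        rw [e]
        rw [prod4_zero_ins _ _ _ (by simp [s2, Fin.ext_iff] <;> omega),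
          prod4_zero_ins _ _ _ (by simp [s1, s2, Fin.ext_iff] <;> omega)]
      · exact (comm_movemove (by simp [s1, s2, Fin.ext_iff] <;> omega)
          (by simp [s1, Fin.ext_iff] <;> omega) (by simp [s1, s2, Fin.ext_iff] <;> omega)
          (by simp [s2, s1, Fin.ext_iff] <;> omega)).eq

variable (hm : 0 < m)

def a0 : Fin m := ⟨0, hm⟩

noncomputable def Uop : Matrix (BS m) (BS m) ℝ :=
  gco m • ins (a0 m hm) + Yop m

lemma s2_ne_a0 (k : Fin (m - 1)) : s2 m k ≠ a0 m hm := by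
  simp [s2, a0, Fin.ext_iff]

lemma comm_del_a0_uop (k : Fin (m - 1)) : Commute (del (a0 m hm)) (uop m k) := by
  by_cases h0 : k.1 = 0
  · have h1 : s1 m k = a0 m hm := by simp [s1, a0, Fin.ext_iff, h0]
    unfold Commute SemiconjBy
    rw [uop, h1]
    calc del (a0 m hm) * (ins (s2 m k) * del (a0 m hm))
        = (del (a0 m hm) * ins (s2 m k)) * del (a0 m hm) := by rw [mul_assoc]
      _ = (ins (s2 m k) * del (a0 m hm)) * del (a0 m hm) := by
            rw [(comm_del_ins (Ne.symm (s2_ne_a0 m hm k))).eq]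
      _ = ins (s2 m k) * (del (a0 m hm) * del (a0 m hm)) := by rw [mul_assoc]
      _ = 0 := by rw [del_mul_del_self, mul_zero]
      _ = ins (s2 m k) * del (a0 m hm) * del (a0 m hm) := by
            rw [mul_assoc, del_mul_del_self, mul_zero]
  · have h1 : a0 m hm ≠ s1 m k := by simp [s1, a0, Fin.ext_iff] <;> omega
    have h2 : a0 m hm ≠ s2 m k := Ne.symm (s2_ne_a0 m hm k)
    rw [uop]
    exact (comm_del_ins h2).mul_right (comm_del_del h1)

lemma comm_del_a0_Yop : del (a0 m hm) * Yop m = Yop m * del (a0 m hm) := by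
  rw [Yop, Finset.mul_sum, Finset.sum_mul]
  refine Finset.sum_congr rfl fun k _ => ?_
  rw [mul_smul_comm, smul_mul_assoc, (comm_del_a0_uop m hm k).eq]

end U


lemma scalar_identity (m : ℕ) (hm : 0 < m) (S : BS m) :
    (gco m * gco m) * (1 - 2 * (if a0 m hm ∈ S then (1 : ℝ) else 0)) +
      ∑ k : Fin (m - 1), (fco m (k.1 + 1) * fco m (k.1 + 1)) *
        ((if s1 m k ∈ S then (1 : ℝ) else 0) - (if s2 m k ∈ S then 1 else 0)) =
      (m * (m + 1) / 2 : ℝ) - 2 * ∑ x ∈ S, ((x.1 : ℝ) + 1) := by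
  obtain ⟨m', rfl⟩ : ∃ m', m = m' + 1 := ⟨m - 1, by omega⟩
  set χ : ℕ → ℝ := fun n => if h : n < m' + 1 then (if (⟨n, h⟩ : Fin (m' + 1)) ∈ S then 1 else 0)
    else 0 with hχ
  set G : ℕ → ℝ := fun n => (((m' : ℝ) + 1) - n) * (((m' : ℝ) + 1) + n + 1) with hG
  have hg : gco (m' + 1) * gco (m' + 1) = ((m' + 1 : ℕ) * ((m' + 1 : ℕ) + 1) / 2 : ℝ) := by
    rw [gco, Real.mul_self_sqrt (by positivity)]
  have hf : ∀ k : Fin (m' + 1 - 1), fco (m' + 1) (k.1 + 1) * fco (m' + 1) (k.1 + 1) =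
      G (k.1 + 1) := by
    intro k
    have hk : k.1 + 1 ≤ m' := by have := k.isLt; omega
    have hk' : ((k.1 : ℝ) + 1) ≤ (m' : ℝ) := by exact_mod_cast hk
    have hnn : (0:ℝ) ≤ (((m' + 1 : ℕ) : ℝ) - ((k.1 + 1 : ℕ) : ℝ)) *
        (((m' + 1 : ℕ) : ℝ) + ((k.1 + 1 : ℕ) : ℝ) + 1) := by
      apply mul_nonneg
      · push_cast; linarith
      · positivity
    rw [fco, Real.mul_self_sqrt hnn]
    simp only [hG]
    push_cast
    ring
  have hxa : (if a0 (m' + 1) hm ∈ S then (1:ℝ) else 0) = χ 0 := by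
    simp only [hχ]
    rw [dif_pos hm]
    rfl
  have hx1 : ∀ k : Fin (m' + 1 - 1), (if s1 (m' + 1) k ∈ S then (1:ℝ) else 0) = χ k.1 := by
    intro k
    have hk : k.1 < m' + 1 := by have := k.isLt; omega
    simp only [hχ]
    rw [dif_pos hk]
    rfl
  have hx2 : ∀ k : Fin (m' + 1 - 1), (if s2 (m' + 1) k ∈ S then (1:ℝ) else 0) = χ (k.1 + 1) := by
    intro k
    have hk : k.1 + 1 < m' + 1 := by have := k.isLt; omega
    simp only [hχ]
    rw [dif_pos hk]
    rfl
  rw [hg, hxa]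
  rw [Finset.sum_congr rfl fun k _ => by rw [hf k, hx1 k, hx2 k]]
  have hsum1 : (∑ k : Fin (m' + 1 - 1), G (k.1 + 1) * (χ k.1 - χ (k.1 + 1))) =
      ∑ n ∈ Finset.range m', G (n + 1) * (χ n - χ (n + 1)) := by
    have h := Fin.sum_univ_eq_sum_range (fun n => G (n + 1) * (χ n - χ (n + 1))) (m' + 1 - 1)
    simpa using h
  rw [hsum1]
  have hterm : ∀ n : ℕ, G (n + 1) * (χ n - χ (n + 1)) =
      (-2 * (((n : ℝ) + 1) * χ n)) + (G n * χ n - G (n + 1) * χ (n + 1)) := by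
    intro n
    have hGn : G (n + 1) = G n - (2 * ((n : ℝ) + 1)) := by
      simp only [hG]; push_cast; ring
    rw [hGn]; ring
  rw [Finset.sum_congr rfl fun n _ => hterm n, Finset.sum_add_distrib,
    Finset.sum_range_sub' (fun n => G n * χ n) m']
  rw [← Finset.mul_sum]
  have hS : (∑ x ∈ S, ((x.1 : ℝ) + 1)) = ∑ n ∈ Finset.range (m' + 1), ((n : ℝ) + 1) * χ n := by
    rw [← Fin.sum_univ_eq_sum_range (fun n => ((n : ℝ) + 1) * χ n) (m' + 1)]
    have : ∀ x : Fin (m' + 1), ((x.1 : ℝ) + 1) * χ x.1 =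
        if x ∈ S then ((x.1 : ℝ) + 1) else 0 := by
      intro x
      simp only [hχ]
      rw [dif_pos x.isLt]
      by_cases h : x ∈ S
      · simp only [Fin.eta, h, if_true, mul_one]
      · simp only [Fin.eta, h, if_false, mul_zero]
    rw [Finset.sum_congr rfl fun x _ => this x]
    rw [Finset.sum_ite_mem, Finset.univ_inter]
  rw [hS, Finset.sum_range_succ]
  have hG0 : G 0 = 2 * (((m' + 1 : ℕ) : ℝ) * (((m' + 1 : ℕ) : ℝ) + 1) / 2) := by
    simp only [hG]; push_cast; ring
  have hGm : G m' = 2 * ((m' : ℝ) + 1) := by simp only [hG]; push_cast; ring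
  rw [hG0, hGm]
  push_cast
  ring

section Key

variable (m : ℕ) (hm : 0 < m)

lemma diag_smul' (c : ℝ) (d : BS m → ℝ) :
    c • Matrix.diagonal d = Matrix.diagonal (fun S => c * d S) := by
  ext T S
  by_cases h : T = S
  · subst h; simp [Matrix.diagonal_apply]
  · simp [Matrix.diagonal_apply, h]

lemma diag_add' (d1 d2 : BS m → ℝ) :
    Matrix.diagonal d1 + Matrix.diagonal d2 = Matrix.diagonal (fun S => d1 S + d2 S) := by
  ext T S
  by_cases h : T = S
  · subst h; simp [Matrix.diagonal_apply]
  · simp [Matrix.diagonal_apply, h]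

lemma diagonal_sum' {ι : Type*} (s : Finset ι) (d : ι → BS m → ℝ) :
    (∑ i ∈ s, Matrix.diagonal (d i)) = Matrix.diagonal (fun S => ∑ i ∈ s, d i S) := by
  ext T S
  by_cases h : T = S
  · subst h; simp [Matrix.sum_apply, Matrix.diagonal_apply]
  · simp [Matrix.sum_apply, Matrix.diagonal_apply, h]

lemma hAY : (Yop m)ᵀ * ins (a0 m hm) = ins (a0 m hm) * (Yop m)ᵀ := by
  have h := congrArg Matrix.transpose (comm_del_a0_Yop m hm)
  rw [Matrix.transpose_mul, Matrix.transpose_mul, del, Matrix.transpose_transpose] at h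
  exact h

lemma hYT' : (Yop m)ᵀ = ∑ k : Fin (m - 1), fco m (k.1 + 1) • (uop m k)ᵀ := by
  rw [Yop, Matrix.transpose_sum]
  exact Finset.sum_congr rfl fun k _ => by rw [Matrix.transpose_smul]

lemma step1 :
    (Uop m hm)ᵀ * Uop m hm - Uop m hm * (Uop m hm)ᵀ =
      (gco m * gco m) • (del (a0 m hm) * ins (a0 m hm) - ins (a0 m hm) * del (a0 m hm)) +
        ((Yop m)ᵀ * Yop m - Yop m * (Yop m)ᵀ) := by
  rw [Uop, Matrix.transpose_add, Matrix.transpose_smul]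
  rw [show (ins (a0 m hm))ᵀ = del (a0 m hm) from rfl]
  rw [add_mul, mul_add, mul_add, add_mul, mul_add, mul_add]
  simp only [smul_mul_assoc, mul_smul_comm, smul_smul]
  rw [comm_del_a0_Yop m hm, hAY m hm, smul_sub]
  abel

lemma step2 :
    (Yop m)ᵀ * Yop m - Yop m * (Yop m)ᵀ =
      ∑ k : Fin (m - 1), (fco m (k.1 + 1) * fco m (k.1 + 1)) •
        ((uop m k)ᵀ * uop m k - uop m k * (uop m k)ᵀ) := by
  have hYY : (Yop m)ᵀ * Yop m = ∑ k : Fin (m - 1), ∑ j : Fin (m - 1),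
      (fco m (k.1 + 1) * fco m (j.1 + 1)) • ((uop m k)ᵀ * uop m j) := by
    rw [hYT', Yop, Finset.sum_mul]
    refine Finset.sum_congr rfl fun k _ => ?_
    rw [smul_mul_assoc, Finset.mul_sum, Finset.smul_sum]
    exact Finset.sum_congr rfl fun j _ => by rw [mul_smul_comm, smul_smul]
  have hYYT : Yop m * (Yop m)ᵀ = ∑ k : Fin (m - 1), ∑ j : Fin (m - 1),
      (fco m (k.1 + 1) * fco m (j.1 + 1)) • (uop m j * (uop m k)ᵀ) := by
    have h1 : Yop m * (Yop m)ᵀ = ∑ a : Fin (m - 1), ∑ b : Fin (m - 1),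
        (fco m (a.1 + 1) * fco m (b.1 + 1)) • (uop m a * (uop m b)ᵀ) := by
      rw [hYT', Yop, Finset.sum_mul]
      refine Finset.sum_congr rfl fun a _ => ?_
      rw [smul_mul_assoc, Finset.mul_sum, Finset.smul_sum]
      exact Finset.sum_congr rfl fun b _ => by rw [mul_smul_comm, smul_smul]
    rw [h1, Finset.sum_comm]
    refine Finset.sum_congr rfl fun k _ => Finset.sum_congr rfl fun j _ => ?_
    rw [mul_comm]
  rw [hYY, hYYT, ← Finset.sum_sub_distrib]
  refine Finset.sum_congr rfl fun k _ => ?_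
  rw [← Finset.sum_sub_distrib]
  rw [Finset.sum_eq_single k]
  · rw [← smul_sub]
  · intro j _ hj
    rw [comm_uopT_uop m (Ne.symm hj), sub_self]
  · intro h; exact absurd (Finset.mem_univ k) h

lemma diag_k (k : Fin (m - 1)) :
    (uop m k)ᵀ * uop m k - uop m k * (uop m k)ᵀ =
      Matrix.diagonal (fun S : BS m =>
        (if s1 m k ∈ S then (1 : ℝ) else 0) - (if s2 m k ∈ S then 1 else 0)) := by
  rw [uopT, uop, move_mul_move _ _ (s1_ne_s2 m k), move_mul_move _ _ (Ne.symm (s1_ne_s2 m k)),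
    Matrix.diagonal_sub]
  refine congrArg Matrix.diagonal (funext fun S => ?_)
  try simp only [Pi.sub_apply]
  by_cases h1 : s1 m k ∈ S <;> by_cases h2 : s2 m k ∈ S <;> simp [h1, h2]

lemma diag_0 :
    del (a0 m hm) * ins (a0 m hm) - ins (a0 m hm) * del (a0 m hm) =
      Matrix.diagonal (fun S : BS m => 1 - 2 * (if a0 m hm ∈ S then (1 : ℝ) else 0)) := by
  rw [del_mul_ins_self, ins_mul_del_self, Matrix.diagonal_sub]
  refine congrArg Matrix.diagonal (funext fun S => ?_)
  try simp only [Pi.sub_apply]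
  by_cases h : a0 m hm ∈ S <;> simp [h] <;> norm_num

theorem key_diag :
    (Uop m hm)ᵀ * Uop m hm - Uop m hm * (Uop m hm)ᵀ =
      Matrix.diagonal (fun S : BS m =>
        (m * (m + 1) / 2 : ℝ) - 2 * ∑ x ∈ S, ((x.1 : ℝ) + 1)) := by
  rw [step1, step2]
  rw [diag_0]
  have : ∀ k : Fin (m - 1), (fco m (k.1 + 1) * fco m (k.1 + 1)) •
        ((uop m k)ᵀ * uop m k - uop m k * (uop m k)ᵀ) =
      Matrix.diagonal (fun S : BS m => (fco m (k.1 + 1) * fco m (k.1 + 1)) *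
        ((if s1 m k ∈ S then (1 : ℝ) else 0) - (if s2 m k ∈ S then 1 else 0))) := by
    intro k
    rw [diag_k, diag_smul']
  rw [Finset.sum_congr rfl fun k _ => this k, diagonal_sum', diag_smul', diag_add']
  refine congrArg Matrix.diagonal (funext fun S => ?_)
  exact scalar_identity m hm S

end Key

section Rank

def rnk {m : ℕ} (S : BS m) : ℕ := ∑ x ∈ S, (x.1 + 1)

lemma rnk_cast {m : ℕ} (S : BS m) : ((rnk S : ℕ) : ℝ) = ∑ x ∈ S, ((x.1 : ℝ) + 1) := by
  rw [rnk]
  push_cast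
  rfl

lemma raise (m : ℕ) (hm : 0 < m) {T S : BS m} (h : Uop m hm T S ≠ 0) :
    rnk T = rnk S + 1 := by
  rw [Uop, Matrix.add_apply, Matrix.smul_apply, Yop, Matrix.sum_apply] at h
  by_cases h1 : a0 m hm ∉ S ∧ T = insert (a0 m hm) S
  · obtain ⟨ha, hT⟩ := h1
    rw [hT, rnk, rnk, Finset.sum_insert ha]
    have : (a0 m hm).1 = 0 := rfl
    omega
  · have hz : ins (a0 m hm) T S = 0 := by rw [ins, if_neg h1]
    rw [hz, smul_zero, zero_add] at h
    obtain ⟨k, -, hk⟩ := Finset.exists_ne_zero_of_sum_ne_zero h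
    rw [Matrix.smul_apply] at hk
    have hk2 : uop m k T S ≠ 0 := fun h0 => hk (by rw [h0, smul_zero])
    rw [uop, ins_mul_del _ _ (Ne.symm (s1_ne_s2 m k))] at hk2
    have hc : s1 m k ∈ S ∧ s2 m k ∉ S ∧ T = insert (s2 m k) (S.erase (s1 m k)) := by
      by_contra hc
      exact hk2 (if_neg hc)
    obtain ⟨hs1, hs2, hT⟩ := hc
    have hs2e : s2 m k ∉ S.erase (s1 m k) := fun h' => hs2 (Finset.mem_of_mem_erase h')
    have e1 : rnk T = ((s2 m k).1 + 1) + ∑ x ∈ S.erase (s1 m k), (x.1 + 1) := by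
      rw [hT, rnk, Finset.sum_insert hs2e]
    have e2 : (∑ x ∈ S.erase (s1 m k), (x.1 + 1)) + ((s1 m k).1 + 1) = rnk S :=
      Finset.sum_erase_add S _ hs1
    have e3 : (s2 m k).1 = (s1 m k).1 + 1 := rfl
    omega

lemma step_card (m : ℕ) (hm : 0 < m) (i : ℕ) (hi : 2 * (i + 1) ≤ m * (m + 1) / 2) :
    Fintype.card {S : BS m // rnk S = i} ≤ Fintype.card {S : BS m // rnk S = i + 1} := by
  classical
  have hNc : ((m * (m + 1) / 2 : ℕ) : ℝ) = ((m : ℝ) * (m + 1) / 2) := by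
    rw [Nat.cast_div (Nat.even_mul_succ_self m).two_dvd (by norm_num)]
    push_cast
    ring
  have hiR : 2 * (i : ℝ) < ((m : ℝ) * (m + 1) / 2) := by
    have := (Nat.cast_le (α := ℝ)).2 hi
    push_cast at this
    rw [← hNc]
    push_cast
    linarith
  set U := Uop m hm with hU
  set M' : Matrix {S : BS m // rnk S = i + 1} {S : BS m // rnk S = i} ℝ :=
    fun T S => U T.1 S.1 with hM'
  have hinj : Function.Injective M'.mulVecLin := by
    rw [injective_iff_map_eq_zero]
    intro w hw
    set v : BS m → ℝ := fun S => if h : rnk S = i then w ⟨S, h⟩ else 0 with hv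
    have hsupp : ∀ S, v S ≠ 0 → rnk S = i := by
      intro S hS
      by_contra hn
      exact hS (by rw [hv]; simp [dif_neg hn])
    -- U *ᵥ v = 0
    have hUv : U *ᵥ v = 0 := by
      funext T
      rw [Matrix.mulVec, Pi.zero_apply]
      by_cases hT : rnk T = i + 1
      · have hMw : (M'.mulVecLin) w ⟨T, hT⟩ = 0 := by rw [hw]; rfl
        rw [Matrix.mulVecLin_apply, Matrix.mulVec, dotProduct] at hMw
        rw [dotProduct]
        rw [← Finset.sum_filter_of_ne (p := fun S : BS m => rnk S = i)
          (fun S _ hne => hsupp S (fun hv0 => hne (by rw [hv0, mul_zero])))]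
        rw [Finset.sum_subtype (p := fun S : BS m => rnk S = i)
          (Finset.univ.filter (fun S : BS m => rnk S = i)) (fun x => by simp)
          (fun S => U T S * v S)]
        refine Eq.trans (Finset.sum_congr rfl fun S _ => ?_) hMw
        have hvw : v S.1 = w S := dif_pos S.2
        rw [hvw]
      · rw [dotProduct]
        apply Finset.sum_eq_zero
        intro S _
        by_cases hvS : v S = 0
        · rw [hvS, mul_zero]
        · have hrS : rnk S = i := hsupp S hvS
          have hUz : U T S = 0 := by
            by_contra hUn
            exact hT (by rw [raise m hm hUn, hrS])
          rw [hUz, zero_mul]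
    -- quadratic form argument: v = 0
    have hdot : (U *ᵥ v) ⬝ᵥ (U *ᵥ v) - ((Uᵀ) *ᵥ v) ⬝ᵥ ((Uᵀ) *ᵥ v) =
        ∑ S : BS m, ((((m : ℝ) * (m + 1) / 2)) - 2 * ∑ x ∈ S, ((x.1 : ℝ) + 1)) * (v S * v S) := by
      have e1 : v ⬝ᵥ ((Uᵀ * U - U * Uᵀ) *ᵥ v) =
          (U *ᵥ v) ⬝ᵥ (U *ᵥ v) - ((Uᵀ) *ᵥ v) ⬝ᵥ ((Uᵀ) *ᵥ v) := by
        rw [Matrix.sub_mulVec, dotProduct_sub]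
        congr 1
        · rw [← Matrix.mulVec_mulVec, Matrix.dotProduct_mulVec, Matrix.vecMul_transpose]
        · rw [← Matrix.mulVec_mulVec, Matrix.dotProduct_mulVec]
          congr 1
          rw [Matrix.mulVec_transpose]
      rw [hU, key_diag m hm, ← hU] at e1
      rw [← e1, dotProduct]
      refine Finset.sum_congr rfl fun S _ => ?_
      rw [Matrix.mulVec_diagonal]
      ring
    rw [hUv] at hdot
    have hle : (∑ S : BS m, ((((m : ℝ) * (m + 1) / 2)) - 2 * ∑ x ∈ S, ((x.1 : ℝ) + 1)) *
        (v S * v S)) ≤ 0 := by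
      rw [← hdot]
      have h1 : (0 : BS m → ℝ) ⬝ᵥ (0 : BS m → ℝ) = 0 := zero_dotProduct 0
      rw [h1, zero_sub, neg_nonpos]
      exact Finset.sum_nonneg fun S _ => mul_self_nonneg _
    have hterm : ∀ S : BS m, 0 ≤ ((((m : ℝ) * (m + 1) / 2)) - 2 * ∑ x ∈ S, ((x.1 : ℝ) + 1)) *
        (v S * v S) := by
      intro S
      by_cases hvS : v S = 0
      · rw [hvS]; simp
      · have hri : rnk S = i := hsupp S hvS
        apply mul_nonneg
        · have hx : (∑ x ∈ S, ((x.1 : ℝ) + 1)) = (i : ℝ) := by rw [← rnk_cast, hri]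
          rw [hx]; linarith
        · exact mul_self_nonneg _
    have hzero := (Finset.sum_eq_zero_iff_of_nonneg (fun S _ => hterm S)).1
      (le_antisymm hle (Finset.sum_nonneg fun S _ => hterm S))
    have hv0 : ∀ S : BS m, v S = 0 := by
      intro S
      by_contra hvS
      have h1 := hzero S (Finset.mem_univ S)
      have hri : rnk S = i := hsupp S hvS
      have hx : (∑ x ∈ S, ((x.1 : ℝ) + 1)) = (i : ℝ) := by rw [← rnk_cast, hri]
      rw [hx] at h1
      have hpos : 0 < ((m : ℝ) * (m + 1) / 2 - 2 * i) := by linarith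
      have hsq : 0 < v S * v S := mul_self_pos.2 hvS
      nlinarith
    funext x
    have hvx : (if h : rnk x.1 = i then w ⟨x.1, h⟩ else 0) = 0 := hv0 x.1
    rw [dif_pos x.2] at hvx
    exact hvx
  calc Fintype.card {S : BS m // rnk S = i}
      = Module.finrank ℝ ({S : BS m // rnk S = i} → ℝ) := (Module.finrank_pi ℝ).symm
    _ ≤ Module.finrank ℝ ({S : BS m // rnk S = i + 1} → ℝ) :=
        LinearMap.finrank_le_finrank_of_injective hinj
    _ = Fintype.card {S : BS m // rnk S = i + 1} := Module.finrank_pi ℝ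

end Rank

lemma card_eq (m i : ℕ) :
    Fintype.card {S : BS m // rnk S = i} =
      (((Finset.Icc 1 m).powerset.filter fun S => S.sum id = i)).card := by
  classical
  rw [Fintype.card_subtype]
  refine Finset.card_bij
    (fun S _ => Finset.map ⟨fun k : Fin m => k.1 + 1, fun a b h => Fin.ext (Nat.succ_injective h)⟩ S)
    ?_ ?_ ?_
  · intro S hS
    simp only [Finset.mem_filter, Finset.mem_univ, true_and] at hS
    simp only [Finset.mem_filter, Finset.mem_powerset]
    constructor
    · intro x hx
      simp only [Finset.mem_map, Function.Embedding.coeFn_mk] at hx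
      obtain ⟨k, -, rfl⟩ := hx
      have := k.isLt
      simp only [Finset.mem_Icc]
      show 1 ≤ k.1 + 1 ∧ k.1 + 1 ≤ m
      omega
    · rw [Finset.sum_map]
      exact hS
  · intro S1 _ S2 _ h
    exact Finset.map_injective _ h
  · intro A hA
    simp only [Finset.mem_filter, Finset.mem_powerset] at hA
    obtain ⟨hsub, hsum⟩ := hA
    refine ⟨Finset.univ.filter (fun k : Fin m => k.1 + 1 ∈ A), ?_, ?_⟩
    · have hmap : Finset.map ⟨fun k : Fin m => k.1 + 1, fun a b h => Fin.ext (Nat.succ_injective h)⟩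
          (Finset.univ.filter (fun k : Fin m => k.1 + 1 ∈ A)) = A := by
        ext x
        simp only [Finset.mem_map, Finset.mem_filter, Finset.mem_univ, true_and,
          Function.Embedding.coeFn_mk]
        constructor
        · rintro ⟨k, hk, rfl⟩; exact hk
        · intro hx
          have hx2 := hsub hx
          simp only [Finset.mem_Icc] at hx2
          refine ⟨⟨x - 1, by omega⟩, ?_, ?_⟩
          · show x - 1 + 1 ∈ A
            rw [show x - 1 + 1 = x by omega]
            exact hx
          · show x - 1 + 1 = x
            omega
      simp only [Finset.mem_filter, Finset.mem_univ, true_and]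
      have h2 : (Finset.map ⟨fun k : Fin m => k.1 + 1, fun a b h => Fin.ext (Nat.succ_injective h)⟩
          (Finset.univ.filter (fun k : Fin m => k.1 + 1 ∈ A))).sum id = A.sum id := by rw [hmap]
      rw [Finset.sum_map] at h2
      rw [rnk, ← hsum, ← h2]
      rfl
    · ext x
      simp only [Finset.mem_map, Finset.mem_filter, Finset.mem_univ, true_and,
        Function.Embedding.coeFn_mk]
      constructor
      · rintro ⟨k, hk, rfl⟩; exact hk
      · intro hx
        have hx2 := hsub hx
        simp only [Finset.mem_Icc] at hx2
        refine ⟨⟨x - 1, by omega⟩, ?_, ?_⟩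
        · show x - 1 + 1 ∈ A
          rw [show x - 1 + 1 = x by omega]
          exact hx
        · show x - 1 + 1 = x
          omega

end RankUni

/-- rank unimodality up to the middle. For `0 ≤ i ≤ j` with
`2j ≤ m(m+1)/2`, the number of subsets of `{1,…,m}` with sum `i` is at most the
number of subsets with sum `j`. -/
theorem rank_unimodal (m : ℕ) (hm : 0 < m) :
    ∀ i j : ℕ, i ≤ j → 2 * j ≤ m * (m + 1) / 2 →
      (((Finset.Icc 1 m).powerset.filter fun S => S.sum id = i)).card ≤
        (((Finset.Icc 1 m).powerset.filter fun S => S.sum id = j)).card := by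
  intro i j hij h2j
  have step : ∀ i' : ℕ, 2 * (i' + 1) ≤ m * (m + 1) / 2 →
      (((Finset.Icc 1 m).powerset.filter fun S => S.sum id = i')).card ≤
        (((Finset.Icc 1 m).powerset.filter fun S => S.sum id = i' + 1)).card := by
    intro i' hi'
    rw [← RankUni.card_eq m i', ← RankUni.card_eq m (i' + 1)]
    exact RankUni.step_card m hm i' hi'
  have main : ∀ j' : ℕ, i ≤ j' → 2 * j' ≤ m * (m + 1) / 2 →
      (((Finset.Icc 1 m).powerset.filter fun S => S.sum id = i)).card ≤
        (((Finset.Icc 1 m).powerset.filter fun S => S.sum id = j')).card := by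
    intro j'
    induction j' with
    | zero =>
      intro h1 _
      have h0 : i = 0 := Nat.le_zero.1 h1
      rw [h0]
    | succ n ih =>
      intro h1 h2
      rcases Nat.eq_or_lt_of_le h1 with he | hlt
      · rw [he]
      · have hn : i ≤ n := by omega
        have h2n : 2 * n ≤ m * (m + 1) / 2 := by omega
        exact le_trans (ih hn h2n) (step n (by omega))
  exact main j hij h2j
end

section
/- Let m be a strictly positive integer and let ⪯ be the partial order on {0,1}^m generated by ≼_SH. Then the maximum length of a chain in ({0,1}^m, ⪯) equals binom(m+1,2) = m(m+1)/2; that is, every chain (totally ⪯-ordered subset) of {0,1}^m has at most m(m+1)/2 + 1 elements, and there exists a chain with exactly m(m+1)/2 + 1 elements. -/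
-- ## Auxiliary lemmas

lemma mem_supp_iff {m : ℕ} {u : Fin m → Bool} {i : Fin m} : i ∈ supp m u ↔ u i = true := by
  simp [supp]

lemma supp_ext {m : ℕ} {u v : Fin m → Bool} (h : supp m u = supp m v) : u = v := by
  funext i
  have h2 := Finset.ext_iff.mp h i
  simp only [mem_supp_iff] at h2
  cases hu : u i <;> cases hv : v i <;> simp [hu, hv] at h2 ⊢ <;> tauto

lemma list_sum_le : ∀ (l₁ l₂ : List ℕ), l₁.length = l₂.length →
    (∀ i (h1 : i < l₁.length) (h2 : i < l₂.length), l₁.get ⟨i, h1⟩ ≤ l₂.get ⟨i, h2⟩) →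
    l₁.sum ≤ l₂.sum ∧ (l₁.sum = l₂.sum → l₁ = l₂)
  | [], [], _, _ => ⟨le_refl _, fun _ => rfl⟩
  | [], _ :: _, hlen, _ => by simp at hlen
  | _ :: _, [], hlen, _ => by simp at hlen
  | a :: l₁, b :: l₂, hlen, hget => by
    have hab : a ≤ b := hget 0 (by simp) (by simp)
    have htail := list_sum_le l₁ l₂ (by simpa using hlen)
      (fun i h1 h2 => hget (i + 1) (by simpa using h1) (by simpa using h2))
    refine ⟨by simp only [List.sum_cons]; exact Nat.add_le_add hab htail.1, ?_⟩
    intro hsum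
    simp only [List.sum_cons] at hsum
    have h1 : a = b := by omega
    have h2 : l₁.sum = l₂.sum := by omega
    rw [h1, htail.2 h2]

lemma rho_eq_sum_sorted {m : ℕ} (u : Fin m → Bool) :
    rho m u = ((sortedSupp m u).map (fun i : Fin _ => i.val + 1)).sum := by
  rw [rho, ← Finset.sum_map_toList]
  exact (List.Perm.sum_eq (List.Perm.map _ (Finset.sort_perm_toList (supp m u) (· ≤ ·)))).symm

lemma rho_strict {m : ℕ} {u v : Fin m → Bool} (h : relSH m u v) :
    u = v ∨ rho m u < rho m v := by
  rcases h with ⟨hcard, hsub⟩ | ⟨hcard, hget⟩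
  · right
    have hne : supp m u ≠ supp m v := fun h => hcard (by rw [h])
    obtain ⟨x, hxv, hxu⟩ := Finset.exists_of_ssubset (lt_of_le_of_ne hsub hne)
    exact Finset.sum_lt_sum_of_subset hsub hxv hxu (Nat.succ_pos _) (fun _ _ _ => Nat.zero_le _)
  · have hlen : (sortedSupp m u).length = (sortedSupp m v).length := by
      simpa [sortedSupp, Finset.length_sort] using hcard
    have key := list_sum_le ((sortedSupp m u).map fun i : Fin _ => i.val + 1)
        ((sortedSupp m v).map fun i : Fin _ => i.val + 1) (by simpa using hlen) ?_
    · rcases Nat.lt_or_ge (rho m u) (rho m v) with h | h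
      · exact Or.inr h
      · left
        have hsum : ((sortedSupp m u).map fun i : Fin _ => i.val + 1).sum
            = ((sortedSupp m v).map fun i : Fin _ => i.val + 1).sum := by
          have h1 := rho_eq_sum_sorted u
          have h2 := rho_eq_sum_sorted v
          omega
        have hlists : sortedSupp m u = sortedSupp m v := by
          refine List.map_injective_iff.mpr ?_ (key.2 hsum)
          intro a b hab
          dsimp only at hab
          exact Fin.ext (by omega)
        apply supp_ext
        have h1 := Finset.sort_toFinset (supp m u) (· ≤ ·)
        have h2 := Finset.sort_toFinset (supp m v) (· ≤ ·)
        rw [← h1, ← h2]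
        unfold sortedSupp at hlists
        rw [hlists]
    · intro i h1 h2
      simp only [List.length_map] at h1 h2
      simp only [List.get_eq_getElem, List.getElem_map] at h1 h2 ⊢
      simp only [List.get_eq_getElem] at hget
      have := hget i h1 h2
      have h3 : ((sortedSupp m u).get ⟨i, h1⟩ : ℕ) ≤ ((sortedSupp m v).get ⟨i, h2⟩ : ℕ) := this
      omega

lemma leSH_rho {m : ℕ} {u v : Fin m → Bool} (h : leSH m u v) :
    u = v ∨ rho m u < rho m v := by
  induction h with
  | refl => exact Or.inl rfl
  | tail _ hbc ih =>
    rcases rho_strict hbc with rfl | hlt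
    · exact ih
    · rcases ih with rfl | ih2
      · exact Or.inr hlt
      · exact Or.inr (ih2.trans hlt)

lemma gauss_sum (m : ℕ) : ∑ i ∈ Finset.range m, (i + 1) = m * (m + 1) / 2 := by
  have h3 := Finset.sum_range_id_mul_two m
  have h4 : ∑ i ∈ Finset.range m, (i + 1) = (∑ i ∈ Finset.range m, i) + m := by
    rw [Finset.sum_add_distrib, Finset.sum_const, Finset.card_range, smul_eq_mul, mul_one]
  have h5 : m * (m + 1) = m * (m - 1) + 2 * m := by
    cases m with
    | zero => simp
    | succ n => simp only [Nat.succ_sub_one]; ring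
  omega

lemma rho_le {m : ℕ} (u : Fin m → Bool) : rho m u ≤ m * (m + 1) / 2 := by
  have h1 : rho m u ≤ ∑ i : Fin m, ((i : ℕ) + 1) :=
    Finset.sum_le_sum_of_subset (Finset.subset_univ _)
  have h2 : ∑ i : Fin m, ((i : ℕ) + 1) = m * (m + 1) / 2 := by
    rw [Fin.sum_univ_eq_sum_range (fun i => i + 1) m]
    exact gauss_sum m
  omega

-- ## The explicit chain

def zvec (m : ℕ) : Fin m → Bool := fun _ => false

def blockF (m t : ℕ) : Finset (Fin m) := Finset.univ.filter (fun i => m - t ≤ i.val)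

def vecSH (m t j : ℕ) : Fin m → Bool := fun i => decide (m - t ≤ i.val ∨ i.val = j)

lemma supp_vecSH {m t j : ℕ} (hj : j < m - t) :
    supp m (vecSH m t j) = insert ⟨j, by omega⟩ (blockF m t) := by
  ext i
  simp only [mem_supp_iff, vecSH, decide_eq_true_eq, Finset.mem_insert, blockF,
    Finset.mem_filter, Finset.mem_univ, true_and, Fin.ext_iff]
  omega

lemma mk_not_mem_blockF {m t j : ℕ} (hj : j < m - t) (hjm : j < m) :
    (⟨j, hjm⟩ : Fin m) ∉ blockF m t := by
  simp only [blockF, Finset.mem_filter, Finset.mem_univ, true_and]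
  omega

lemma card_blockF {m t : ℕ} (ht : t ≤ m) : (blockF m t).card = t := by
  have himg : (blockF m t).image Fin.val = Finset.Ico (m - t) m := by
    ext a
    simp only [Finset.mem_image, blockF, Finset.mem_filter, Finset.mem_univ, true_and,
      Finset.mem_Ico]
    constructor
    · rintro ⟨i, hi, rfl⟩; exact ⟨hi, i.isLt⟩
    · rintro ⟨h1, h2⟩; exact ⟨⟨a, h2⟩, h1, rfl⟩
  have h2 := Finset.card_image_of_injective (blockF m t) Fin.val_injective
  rw [himg, Nat.card_Ico] at h2
  omega

lemma sortedSupp_vecSH {m t j : ℕ} (hj : j < m - t) :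
    sortedSupp m (vecSH m t j)
      = ⟨j, by omega⟩ :: Finset.sort (blockF m t) (· ≤ ·) := by
  rw [sortedSupp, supp_vecSH hj, Finset.sort_insert]
  · intro b hb
    simp only [blockF, Finset.mem_filter, Finset.mem_univ, true_and] at hb
    rw [Fin.le_def]
    simp only []
    omega
  · exact mk_not_mem_blockF hj (by omega)

lemma cons_get_le {α : Type*} [Preorder α] {a b : α} {l : List α} (hab : a ≤ b) (i : ℕ)
    (h1 : i < (a :: l).length) (h2 : i < (b :: l).length) :
    (a :: l).get ⟨i, h1⟩ ≤ (b :: l).get ⟨i, h2⟩ := by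
  cases i with
  | zero => exact hab
  | succ n => exact le_refl _

lemma relSH_slide {m t j : ℕ} (h : j + 1 < m - t) :
    relSH m (vecSH m t j) (vecSH m t (j + 1)) := by
  have hj : j < m - t := by omega
  right
  constructor
  · rw [supp_vecSH hj, supp_vecSH h,
      Finset.card_insert_of_notMem (mk_not_mem_blockF hj (by omega)),
      Finset.card_insert_of_notMem (mk_not_mem_blockF h (by omega))]
  · intro i h1 h2
    have e1 := sortedSupp_vecSH (m := m) hj
    have e2 := sortedSupp_vecSH (m := m) h
    rw [List.get_of_eq e1, List.get_of_eq e2]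
    exact cons_get_le (by rw [Fin.le_def]; simp only []; omega) i _ _

lemma supp_vecSH_last {m t : ℕ} (ht : t < m) :
    supp m (vecSH m t (m - t - 1)) = blockF m (t + 1) := by
  ext i
  simp only [mem_supp_iff, vecSH, decide_eq_true_eq, blockF, Finset.mem_filter,
    Finset.mem_univ, true_and]
  omega

lemma relSH_up {m t : ℕ} (ht : t + 1 < m) :
    relSH m (vecSH m t (m - t - 1)) (vecSH m (t + 1) 0) := by
  left
  have h0 : (0 : ℕ) < m - (t + 1) := by omega
  rw [supp_vecSH_last (by omega), supp_vecSH h0]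
  refine ⟨?_, Finset.subset_insert _ _⟩
  rw [Finset.card_insert_of_notMem (mk_not_mem_blockF h0 (by omega)),
    card_blockF (by omega : t + 1 ≤ m)]
  omega

lemma leSH_slides {m t : ℕ} : ∀ j' j, j ≤ j' → j' < m - t → leSH m (vecSH m t j) (vecSH m t j')
  | 0, j, h, _ => by
      have hj : j = 0 := by omega
      subst hj; exact Relation.ReflTransGen.refl
  | k + 1, j, h, h' => by
      rcases Nat.eq_or_lt_of_le h with rfl | hlt
      · exact Relation.ReflTransGen.refl
      · exact Relation.ReflTransGen.tail
          (leSH_slides (m := m) (t := t) k j (by omega) (by omega)) (relSH_slide h')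

lemma leSH_stage {m t : ℕ} : ∀ t', t ≤ t' → t' < m → leSH m (vecSH m t 0) (vecSH m t' 0)
  | 0, h, _ => by
      have ht : t = 0 := by omega
      subst ht; exact Relation.ReflTransGen.refl
  | k + 1, h, h' => by
      rcases Nat.eq_or_lt_of_le h with rfl | hlt
      · exact Relation.ReflTransGen.refl
      · have h1 := leSH_stage (m := m) (t := t) k (by omega) (by omega)
        have h2 := leSH_slides (m := m) (t := k) (m - k - 1) 0 (by omega) (by omega)
        exact Relation.ReflTransGen.tail (h1.trans h2) (relSH_up h')

lemma leSH_main {m t t' j j' : ℕ} (ht' : t' < m) (hj : j < m - t) (hj' : j' < m - t')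
    (hle : t < t' ∨ (t = t' ∧ j ≤ j')) : leSH m (vecSH m t j) (vecSH m t' j') := by
  rcases hle with hlt | ⟨rfl, hjj⟩
  · have h1 := leSH_slides (m := m) (t := t) (m - t - 1) j (by omega) (by omega)
    have h2 : relSH m (vecSH m t (m - t - 1)) (vecSH m (t + 1) 0) := relSH_up (by omega)
    have h3 := leSH_stage (m := m) (t := t + 1) t' (by omega) ht'
    have h4 := leSH_slides (m := m) (t := t') j' 0 (by omega) hj'
    exact ((h1.tail h2).trans h3).trans h4
  · exact leSH_slides j' j hjj hj'

lemma supp_zvec (m : ℕ) : supp m (zvec m) = ∅ := by simp [supp, zvec]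

lemma leSH_zvec {m : ℕ} (v : Fin m → Bool) : leSH m (zvec m) v := by
  by_cases h : v = zvec m
  · subst h; exact Relation.ReflTransGen.refl
  · refine Relation.ReflTransGen.single (Or.inl ⟨?_, by simp [supp_zvec]⟩)
    rw [supp_zvec]
    simp only [Finset.card_empty]
    intro hc
    have h0 : supp m v = ∅ := Finset.card_eq_zero.mp hc.symm
    exact h (supp_ext (by rw [h0, supp_zvec])).symm


/-- the maximum length of a chain in `({0,1}^m, ⪯)` equals
`binom(m+1,2) = m(m+1)/2`: every chain has at most `m(m+1)/2 + 1` elements,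
and some chain has exactly `m(m+1)/2 + 1` elements. -/
theorem max_chain_length (m : ℕ) (hm : 0 < m) :
    (∀ C : Finset (Fin m → Bool),
      (∀ u ∈ C, ∀ v ∈ C, leSH m u v ∨ leSH m v u) →
      C.card ≤ m * (m + 1) / 2 + 1) ∧
    (∃ C : Finset (Fin m → Bool),
      (∀ u ∈ C, ∀ v ∈ C, leSH m u v ∨ leSH m v u) ∧
      C.card = m * (m + 1) / 2 + 1) := by
  constructor
  · intro C hC
    have hinj : Set.InjOn (rho m) ↑C := by
      intro u hu v hv huv
      by_contra hne
      rcases hC u (Finset.mem_coe.mp hu) v (Finset.mem_coe.mp hv) with h | h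
      · rcases leSH_rho h with h' | h'
        · exact hne h'
        · omega
      · rcases leSH_rho h with h' | h'
        · exact hne h'.symm
        · omega
    calc C.card = (C.image (rho m)).card := (Finset.card_image_of_injOn hinj).symm
      _ ≤ (Finset.range (m * (m + 1) / 2 + 1)).card := by
          apply Finset.card_le_card
          intro x hx
          simp only [Finset.mem_image] at hx
          obtain ⟨u, _, rfl⟩ := hx
          exact Finset.mem_range.mpr (Nat.lt_succ_of_le (rho_le u))
      _ = _ := Finset.card_range _
  · classical
    set S : Finset ((_ : ℕ) × ℕ) :=
      (Finset.range m).sigma (fun t => Finset.range (m - t)) with hS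
    set f : (_ : ℕ) × ℕ → (Fin m → Bool) := fun p => vecSH m p.1 p.2 with hf
    refine ⟨insert (zvec m) (S.image f), ?_, ?_⟩
    · intro u hu v hv
      simp only [Finset.mem_insert, Finset.mem_image] at hu hv
      rcases hu with rfl | ⟨p, hp, rfl⟩
      · left; exact leSH_zvec v
      rcases hv with rfl | ⟨q, hq, rfl⟩
      · right; exact leSH_zvec _
      simp only [hS, Finset.mem_sigma, Finset.mem_range] at hp hq
      rcases lt_trichotomy p.1 q.1 with h | h | h
      · left; exact leSH_main hq.1 hp.2 hq.2 (Or.inl h)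
      · rcases Nat.le_total p.2 q.2 with h2 | h2
        · left; exact leSH_main hq.1 hp.2 hq.2 (Or.inr ⟨h, h2⟩)
        · right; exact leSH_main hp.1 hq.2 hp.2 (Or.inr ⟨h.symm, h2⟩)
      · right; exact leSH_main hp.1 hq.2 hp.2 (Or.inl h)
    · have hinj : Set.InjOn f ↑S := by
        rintro ⟨t, j⟩ hp ⟨t', j'⟩ hq hpq
        simp only [hS, Finset.coe_sigma, Set.mem_sigma_iff, Finset.mem_coe,
          Finset.mem_range] at hp hq
        simp only [hf] at hpq
        have hj : j < m - t := hp.2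
        have hj' : j' < m - t' := hq.2
        have hs : supp m (vecSH m t j) = supp m (vecSH m t' j') := by rw [hpq]
        rw [supp_vecSH hj, supp_vecSH hj'] at hs
        have hcard : t + 1 = t' + 1 := by
          have := congrArg Finset.card hs
          rwa [Finset.card_insert_of_notMem (mk_not_mem_blockF hj (by omega)),
            Finset.card_insert_of_notMem (mk_not_mem_blockF hj' (by omega)),
            card_blockF (by omega : t ≤ m), card_blockF (by omega : t' ≤ m)] at this
        have ht : t = t' := by omega
        subst ht
        have hmem : (⟨j, by omega⟩ : Fin m) ∈ insert (⟨j', by omega⟩ : Fin m) (blockF m t) := by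
          rw [← hs]; exact Finset.mem_insert_self _ _
        rcases Finset.mem_insert.mp hmem with h | h
        · have : j = j' := by simpa [Fin.ext_iff] using h
          subst this; rfl
        · exact absurd h (mk_not_mem_blockF hj (by omega))
      have hz : zvec m ∉ S.image f := by
        simp only [Finset.mem_image]
        rintro ⟨⟨t, j⟩, hp, heq⟩
        simp only [hS, Finset.mem_sigma, Finset.mem_range] at hp
        have hcontra := congrFun heq ⟨j, by omega⟩
        simp [hf, vecSH, zvec] at hcontra
      rw [Finset.card_insert_of_notMem hz, Finset.card_image_of_injOn hinj]
      have hcS : S.card = m * (m + 1) / 2 := by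
        rw [hS, Finset.card_sigma]
        simp only [Finset.card_range]
        have hrefl := Finset.sum_range_reflect (fun k => k + 1) m
        have he : ∑ j ∈ Finset.range m, (m - j) = ∑ j ∈ Finset.range m, (m - 1 - j + 1) := by
          apply Finset.sum_congr rfl
          intro x hx
          simp only [Finset.mem_range] at hx
          omega
        rw [he, hrefl, gauss_sum]
      rw [hcS]
end

section
/- Let m be a strictly positive integer. For 1 ≤ j ≤ m set k_j = ∑_{l=1}^{j−1} 2^{m−l} and S_j = { k_j + 2^i : 0 ≤ i ≤ m−j }, and let S = ∪_{j=1}^m S_j ⊆ {0,1,…,2^m − 1}. Then the sets S_j are pairwise disjoint with #S_j = m + 1 − j, hence #S = binom(m+1,2) = m(m+1)/2, and the set of binary vectors of length m obtained as the binary expansions of the elements of S (bit i−1 of the integer giving coordinate i of the vector) is a chain, i.e., totally ordered, under the partial order ⪯ generated by ≼_SH. -/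
/-- The binary vector of length `m` obtained from the binary expansion of `n`
(bit `i-1` of `n` gives coordinate `i`, i.e. bit `i` gives coordinate `i` in
0-based indexing). -/
def toVec (m : ℕ) (n : ℕ) : Fin m → Bool := fun i => n.testBit (i : ℕ)


lemma tb_mul_add (s a b t : ℕ) (hb : b < 2^s) :
    (2^s * a + b).testBit t = if t < s then b.testBit t else a.testBit (t - s) := by
  split_ifs with h
  · have h1 : (2^s * a + b) % 2^s = b := by
      rw [add_comm, Nat.add_mul_mod_self_left, Nat.mod_eq_of_lt hb]
    have := Nat.testBit_mod_two_pow (2^s * a + b) s t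
    rw [h1] at this
    simp [h] at this
    exact this.symm
  · have h1 : (2^s * a + b) / 2^s = a := by
      rw [add_comm, Nat.add_mul_div_left _ _ (Nat.two_pow_pos s),
        Nat.div_eq_of_lt hb, zero_add]
    rw [Nat.testBit_eq_decide_div_mod_eq, Nat.testBit_eq_decide_div_mod_eq]
    have h2 : 2^t = 2^s * 2^(t-s) := by rw [← pow_add]; congr 1; omega
    rw [h2, ← Nat.div_div_eq_div_mul, h1]

def Kk (m j : ℕ) : ℕ := ∑ l ∈ Finset.Icc 1 (j-1), 2^(m-l)

lemma Kk_succ (m j : ℕ) (hj : 1 ≤ j) : Kk m (j+1) = Kk m j + 2^(m-j) := by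
  obtain ⟨j', rfl⟩ := Nat.exists_eq_add_of_le hj
  unfold Kk
  simp only [Nat.add_sub_cancel]
  rw [add_comm 1 j', Finset.sum_Icc_succ_top (by omega)]
  congr 1

lemma Kk_mono (m : ℕ) {j j' : ℕ} (h : j ≤ j') : Kk m j ≤ Kk m j' :=
  Finset.sum_le_sum_of_subset (Finset.Icc_subset_Icc_right (by omega))

lemma Kk_closed (m : ℕ) : ∀ j, 1 ≤ j → j ≤ m + 1 → Kk m j = 2^m - 2^(m+1-j) := by
  intro j hj
  induction j, hj using Nat.le_induction with
  | base => intro _; simp [Kk]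
  | succ j hj ih =>
    intro hj2
    rw [Kk_succ m j hj, ih (by omega)]
    have h1 : m + 1 - j = (m - j) + 1 := by omega
    have h2 : 2^(m-j) * 2 ≤ 2^m := by
      rw [← pow_succ]; exact Nat.pow_le_pow_right (by norm_num) (by omega)
    have h3 : m + 1 - (j+1) = m - j := by omega
    rw [h1, h3, pow_succ]
    omega

lemma tb_elem (m j i t : ℕ) (hj1 : 1 ≤ j) (hjm : j ≤ m) (hi : i ≤ m - j) :
    (Kk m j + 2^i).testBit t = decide (t = i ∨ (m + 1 - j ≤ t ∧ t < m)) := by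
  set s := m + 1 - j with hs
  have hsm : s ≤ m := by omega
  have hkey : Kk m j = 2^s * (2^(m-s) - 1) := by
    rw [Kk_closed m j hj1 (by omega), Nat.mul_sub_one, ← pow_add]
    congr 2
    omega
  have h2i : 2^i < 2^s := Nat.pow_lt_pow_right (by norm_num) (by omega)
  rw [hkey, tb_mul_add s _ _ t h2i]
  split_ifs with h
  · rw [Nat.testBit_two_pow]
    simp only [decide_eq_decide]
    omega
  · rw [Nat.testBit_two_pow_sub_one]
    simp only [decide_eq_decide]
    omega

def Tt (m j : ℕ) : Finset (Fin m) := Finset.univ.filter (fun t => m + 1 - j ≤ (t:ℕ))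

lemma supp_elem (m j i : ℕ) (hj1 : 1 ≤ j) (hjm : j ≤ m) (hi : i ≤ m - j) (him : i < m) :
    supp m (toVec m (Kk m j + 2^i)) = insert ⟨i, him⟩ (Tt m j) := by
  ext t
  rw [supp, Finset.mem_filter]
  simp only [supp, toVec, Tt, Finset.mem_filter, Finset.mem_univ, true_and,
    Finset.mem_insert, Fin.ext_iff, tb_elem m j i t.1 hj1 hjm hi, decide_eq_true_eq]
  have := t.isLt
  omega

lemma card_Tt (m j : ℕ) (hjm : j ≤ m) : (Tt m j).card = j - 1 := by
  have himg : (Tt m j).image Fin.val = Finset.Ico (m + 1 - j) m := by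
    ext a
    simp only [Tt, Finset.mem_image, Finset.mem_filter, Finset.mem_univ, true_and,
      Finset.mem_Ico]
    constructor
    · rintro ⟨t, ht, rfl⟩; exact ⟨ht, t.isLt⟩
    · rintro ⟨h1, h2⟩; exact ⟨⟨a, h2⟩, h1, rfl⟩
  have := Finset.card_image_of_injective (Tt m j) (Fin.val_injective)
  rw [himg, Nat.card_Ico] at this
  omega

lemma mem_Tt (m j : ℕ) {t : Fin m} : t ∈ Tt m j ↔ m + 1 - j ≤ (t : ℕ) := by
  simp [Tt]

lemma sortedSupp_elem (m j i : ℕ) (hj1 : 1 ≤ j) (hjm : j ≤ m) (hi : i ≤ m - j) (him : i < m) :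
    sortedSupp m (toVec m (Kk m j + 2^i)) =
      ⟨i, him⟩ :: Finset.sort (Tt m j) (· ≤ ·) := by
  rw [sortedSupp, supp_elem m j i hj1 hjm hi him, Finset.sort_insert]
  · intro b hb
    rw [mem_Tt] at hb
    exact Fin.mk_le_of_le_val (by omega)
  · simp only [mem_Tt, Fin.val_mk]
    omega

lemma relH_block (m j i i' : ℕ) (hj1 : 1 ≤ j) (hjm : j ≤ m) (hii' : i ≤ i') (hi' : i' ≤ m - j) :
    relH m (toVec m (Kk m j + 2^i)) (toVec m (Kk m j + 2^i')) := by
  have hi : i ≤ m - j := le_trans hii' hi'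
  have him : i < m := by omega
  have him' : i' < m := by omega
  constructor
  · rw [supp_elem m j i hj1 hjm hi him, supp_elem m j i' hj1 hjm hi' him',
      Finset.card_insert_of_notMem (by simp only [mem_Tt, Fin.val_mk]; omega),
      Finset.card_insert_of_notMem (by simp only [mem_Tt, Fin.val_mk]; omega)]
  · rw [sortedSupp_elem m j i hj1 hjm hi him, sortedSupp_elem m j i' hj1 hjm hi' him']
    intro idx hu hv
    match idx with
    | 0 => exact Fin.mk_le_mk.mpr hii'
    | (n+1) => simp only [List.get_cons_succ]; exact le_refl _

lemma supp_top (m j : ℕ) (hj1 : 1 ≤ j) (hjm : j ≤ m) :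
    supp m (toVec m (Kk m j + 2^(m-j))) = Tt m (j+1) := by
  rw [supp_elem m j (m-j) hj1 hjm (le_refl _) (by omega)]
  ext t
  simp only [Finset.mem_insert, mem_Tt, Fin.ext_iff]
  have := t.isLt
  omega

lemma relSH_cross (m j i' : ℕ) (hj1 : 1 ≤ j) (hjm : j + 1 ≤ m) (hi' : i' ≤ m - (j+1)) :
    relSH m (toVec m (Kk m j + 2^(m-j))) (toVec m (Kk m (j+1) + 2^i')) := by
  left
  have him' : i' < m := by omega
  rw [supp_top m j hj1 (by omega),
    supp_elem m (j+1) i' (by omega) hjm hi' him',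
    Finset.card_insert_of_notMem (by simp only [mem_Tt, Fin.val_mk]; omega), card_Tt m (j+1) hjm]
  constructor
  · omega
  · exact Finset.subset_insert _ _

lemma cross_chain (m j : ℕ) (hj1 : 1 ≤ j) : ∀ j', j < j' → j' ≤ m → ∀ i', i' ≤ m - j' →
    leSH m (toVec m (Kk m j + 2^(m-j))) (toVec m (Kk m j' + 2^i')) := by
  intro j'
  induction j' with
  | zero => omega
  | succ n ih =>
    intro hlt hle i' hi'
    by_cases h : j = n
    · subst h
      exact Relation.ReflTransGen.single (relSH_cross m j i' hj1 hle hi')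
    · have hjn : j < n := by omega
      have step := relSH_cross m n i' (by omega) hle hi'
      exact (ih hjn (by omega) (m - n) (le_refl _)).tail step

lemma main_chain (m j i j' i' : ℕ) (hj1 : 1 ≤ j) (hj'm : j' ≤ m) (hi : i ≤ m - j)
    (hi' : i' ≤ m - j') (hord : j < j' ∨ (j = j' ∧ i ≤ i')) :
    leSH m (toVec m (Kk m j + 2^i)) (toVec m (Kk m j' + 2^i')) := by
  rcases hord with h | ⟨rfl, hii⟩
  · have h1 : relSH m (toVec m (Kk m j + 2^i)) (toVec m (Kk m j + 2^(m-j))) :=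
      Or.inr (relH_block m j i (m-j) hj1 (by omega) hi (le_refl _))
    exact Relation.ReflTransGen.head h1 (cross_chain m j hj1 j' h hj'm i' hi')
  · exact Relation.ReflTransGen.single (Or.inr (relH_block m j i i' hj1 hj'm hii hi'))

/-- with `k_j = ∑_{l=1}^{j-1} 2^{m-l}` and
`S_j = { k_j + 2^i : 0 ≤ i ≤ m-j }`, the sets `S_j` (for `1 ≤ j ≤ m`) are pairwise
disjoint with `#S_j = m + 1 - j`, hence `#S = m(m+1)/2` for `S = ∪_j S_j`, and the
binary expansions of the elements of `S` form a chain under the order generated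
by `≼_SH`. -/
theorem algorithm_max_chain (m : ℕ) (hm : 0 < m) :
    (∀ j₁ ∈ Finset.Icc 1 m, ∀ j₂ ∈ Finset.Icc 1 m, j₁ ≠ j₂ →
      Disjoint
        ((Finset.range (m - j₁ + 1)).image
          (fun i => (∑ l ∈ Finset.Icc 1 (j₁ - 1), 2 ^ (m - l)) + 2 ^ i))
        ((Finset.range (m - j₂ + 1)).image
          (fun i => (∑ l ∈ Finset.Icc 1 (j₂ - 1), 2 ^ (m - l)) + 2 ^ i))) ∧
    (∀ j ∈ Finset.Icc 1 m,
      ((Finset.range (m - j + 1)).image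
        (fun i => (∑ l ∈ Finset.Icc 1 (j - 1), 2 ^ (m - l)) + 2 ^ i)).card =
        m + 1 - j) ∧
    ((Finset.Icc 1 m).biUnion (fun j =>
        (Finset.range (m - j + 1)).image
          (fun i => (∑ l ∈ Finset.Icc 1 (j - 1), 2 ^ (m - l)) + 2 ^ i))).card =
      m * (m + 1) / 2 ∧
    (∀ a ∈ (Finset.Icc 1 m).biUnion (fun j =>
        (Finset.range (m - j + 1)).image
          (fun i => (∑ l ∈ Finset.Icc 1 (j - 1), 2 ^ (m - l)) + 2 ^ i)),
      ∀ b ∈ (Finset.Icc 1 m).biUnion (fun j =>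
        (Finset.range (m - j + 1)).image
          (fun i => (∑ l ∈ Finset.Icc 1 (j - 1), 2 ^ (m - l)) + 2 ^ i)),
      leSH m (toVec m a) (toVec m b) ∨ leSH m (toVec m b) (toVec m a)) := by
  
  have hK : ∀ j : ℕ, (∑ l ∈ Finset.Icc 1 (j - 1), 2 ^ (m - l)) = Kk m j := fun _ => rfl
  simp only [hK]
  have aux : ∀ j₁ j₂ : ℕ, 1 ≤ j₁ → j₂ ≤ m → j₁ < j₂ →
      Disjoint
        ((Finset.range (m - j₁ + 1)).image (fun i => Kk m j₁ + 2 ^ i))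
        ((Finset.range (m - j₂ + 1)).image (fun i => Kk m j₂ + 2 ^ i)) := by
    intro j₁ j₂ h1 h2 h3
    rw [Finset.disjoint_left]
    rintro a ha hb
    simp only [Finset.mem_image, Finset.mem_range] at ha hb
    obtain ⟨i, hi, rfl⟩ := ha
    obtain ⟨i', hi', he⟩ := hb
    have e1 : 2^i ≤ 2^(m-j₁) := Nat.pow_le_pow_right (by norm_num) (by omega)
    have e2 : Kk m j₁ + 2^(m-j₁) ≤ Kk m j₂ := by
      rw [← Kk_succ m j₁ h1]; exact Kk_mono m (by omega)
    have e3 : 0 < 2^i' := Nat.two_pow_pos i'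
    omega
  have hdisj : ∀ j₁ ∈ Finset.Icc 1 m, ∀ j₂ ∈ Finset.Icc 1 m, j₁ ≠ j₂ →
      Disjoint
        ((Finset.range (m - j₁ + 1)).image (fun i => Kk m j₁ + 2 ^ i))
        ((Finset.range (m - j₂ + 1)).image (fun i => Kk m j₂ + 2 ^ i)) := by
    intro j₁ hj₁ j₂ hj₂ hne
    rw [Finset.mem_Icc] at hj₁ hj₂
    rcases Nat.lt_or_ge j₁ j₂ with h | h
    · exact aux j₁ j₂ hj₁.1 hj₂.2 h
    · exact (aux j₂ j₁ hj₂.1 hj₁.2 (by omega)).symm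
  have hcard : ∀ j ∈ Finset.Icc 1 m,
      ((Finset.range (m - j + 1)).image (fun i => Kk m j + 2 ^ i)).card = m + 1 - j := by
    intro j hj
    rw [Finset.mem_Icc] at hj
    have hinj : Function.Injective (fun i : ℕ => Kk m j + 2 ^ i) := by
      intro a b h
      simp only at h
      have h2 : 2^a = 2^b := by omega
      exact Nat.pow_right_injective (le_refl 2) h2
    rw [Finset.card_image_of_injective _ hinj, Finset.card_range]
    omega
  refine ⟨hdisj, hcard, ?_, ?_⟩
  · rw [Finset.card_biUnion hdisj, Finset.sum_congr rfl hcard]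
    have hre : ∑ j ∈ Finset.Icc 1 m, (m + 1 - j) = ∑ i ∈ Finset.range m, (m - i) := by
      have himg : Finset.Icc 1 m = (Finset.range m).image (· + 1) := by
        ext x
        simp only [Finset.mem_Icc, Finset.mem_image, Finset.mem_range]
        constructor
        · rintro ⟨h1, h2⟩; exact ⟨x - 1, by omega, by omega⟩
        · rintro ⟨a, ha, rfl⟩; omega
      rw [himg, Finset.sum_image (fun a _ b _ h => by omega)]
      exact Finset.sum_congr rfl (fun i _ => by omega)
    have hrefl : ∑ i ∈ Finset.range m, (m - i) = ∑ i ∈ Finset.range m, (i + 1) := by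
      rw [← Finset.sum_range_reflect]
      refine Finset.sum_congr rfl (fun i hi => ?_)
      rw [Finset.mem_range] at hi
      omega
    have hsucc : ∑ i ∈ Finset.range m, (i + 1) = ∑ i ∈ Finset.range (m+1), i := by
      rw [Finset.sum_range_succ' (fun i => i) m]
      simp
    have hg := Finset.sum_range_id_mul_two (m+1)
    rw [hre, hrefl, hsucc]
    symm
    refine Nat.div_eq_of_eq_mul_left (by norm_num) ?_
    simp only [Nat.add_sub_cancel] at hg
    rw [hg]
    ring
  · intro a ha b hb
    simp only [Finset.mem_biUnion, Finset.mem_image, Finset.mem_range, Finset.mem_Icc] at ha hb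
    obtain ⟨j, ⟨hj1, hjm⟩, i, hi, rfl⟩ := ha
    obtain ⟨j', ⟨hj'1, hj'm⟩, i', hi', rfl⟩ := hb
    rcases Nat.lt_trichotomy j j' with h | h | h
    · exact Or.inl (main_chain m j i j' i' hj1 hj'm (by omega) (by omega) (Or.inl h))
    · subst h
      rcases le_total i i' with hii | hii
      · exact Or.inl (main_chain m j i j i' hj1 hjm (by omega) (by omega) (Or.inr ⟨rfl, hii⟩))
      · exact Or.inr (main_chain m j i' j i hj1 hjm (by omega) (by omega) (Or.inr ⟨rfl, hii⟩))
    · exact Or.inr (main_chain m j' i' j i hj'1 hjm (by omega) (by omega) (Or.inl h))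
end

section
/- Let m be a strictly positive integer and p ∈ (0,1). If u ∈ {0,1}^m is not the all-zeros vector, then p^{2^m} < Rel(C^u; p); and if u is not the all-ones vector, then Rel(C^u; p) < 1 − (1−p)^{2^m}. -/
lemma RelC_succ (m : ℕ) (u : Fin (m+1) → Bool) (p : ℝ) :
    RelC (m+1) u p = g (u 0) (RelC m (fun i => u i.succ) p) := by
  simp [RelC, List.finRange_succ, List.foldr_map]

lemma RelC_mem (m : ℕ) (u : Fin m → Bool) (p : ℝ) (hp : p ∈ Set.Ioo (0:ℝ) 1) :
    RelC m u p ∈ Set.Ioo (0:ℝ) 1 := by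
  induction m with
  | zero => simpa [RelC] using hp
  | succ n ih =>
    rw [RelC_succ]
    set q := RelC n (fun i => u i.succ) p with hq
    have h := ih (fun i => u i.succ)
    obtain ⟨h0, h1⟩ := h
    cases hb : u 0
    · unfold g; rw [if_neg Bool.false_ne_true]; exact ⟨by nlinarith, by nlinarith⟩
    · unfold g; rw [if_pos rfl]; exact ⟨by nlinarith, by nlinarith⟩

lemma RelC_lower (m : ℕ) (u : Fin m → Bool) (p : ℝ) (hp : p ∈ Set.Ioo (0:ℝ) 1) :
    p ^ (2 ^ m) ≤ RelC m u p ∧ ((∃ i, u i = true) → p ^ (2 ^ m) < RelC m u p) := by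
  induction m with
  | zero =>
    refine ⟨by simp [RelC], ?_⟩
    rintro ⟨i, _⟩; exact absurd i.2 (by omega)
  | succ n ih =>
    obtain ⟨hle, hlt⟩ := ih (fun i => u i.succ)
    obtain ⟨hq0, hq1⟩ := RelC_mem n (fun i => u i.succ) p hp
    obtain ⟨hp0, hp1⟩ := hp
    have hppos : (0:ℝ) < p ^ 2 ^ n := pow_pos hp0 _
    have hple : p ^ 2 ^ n ≤ 1 := le_of_lt (pow_lt_one₀ (le_of_lt hp0) hp1 (by positivity))
    rw [RelC_succ]
    set q := RelC n (fun i => u i.succ) p with hqdef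
    have h2 : p ^ 2 ^ (n+1) = (p ^ 2 ^ n) ^ 2 := by
      rw [← pow_mul]; ring_nf
    cases hb : u 0 with
    | false =>
      unfold g; rw [if_neg Bool.false_ne_true]
      constructor
      · rw [h2]; nlinarith
      · rintro ⟨i, hi⟩
        have : ∃ j : Fin n, u j.succ = true := by
          rcases Fin.eq_zero_or_eq_succ i with h | ⟨j, rfl⟩
          · rw [h] at hi; rw [hi] at hb; exact absurd hb (by simp)
          · exact ⟨j, hi⟩
        have := hlt this
        rw [h2]; nlinarith
    | true =>
      unfold g; rw [if_pos rfl]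
      have key : q < 1 - (1 - q)^2 := by nlinarith
      have : p ^ 2 ^ (n+1) < q := by
        rw [h2]; nlinarith
      exact ⟨le_of_lt (this.trans key), fun _ => this.trans key⟩

lemma RelC_dual (m : ℕ) (u : Fin m → Bool) (p : ℝ) :
    RelC m (fun i => !(u i)) (1 - p) = 1 - RelC m u p := by
  induction m with
  | zero => simp [RelC]
  | succ n ih =>
    rw [RelC_succ, RelC_succ, ih (fun i => u i.succ)]
    cases hb : u 0 <;> simp [g, hb] <;> ring

/-- strict versions of the extremal bounds, for `p ∈ (0,1)`:
if `u` is not all-zeros then `p^{2^m} < Rel(C^u;p)`, and if `u` is not all-ones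
then `Rel(C^u;p) < 1 - (1-p)^{2^m}`. -/
theorem strict_extremal_bounds (m : ℕ) (hm : 0 < m) (u : Fin m → Bool)
    (p : ℝ) (hp : p ∈ Set.Ioo (0:ℝ) 1) :
    ((u ≠ fun _ => false) → p ^ (2 ^ m) < RelC m u p) ∧
      ((u ≠ fun _ => true) → RelC m u p < 1 - (1 - p) ^ (2 ^ m)) := by
  obtain ⟨hp0, hp1⟩ := hp
  constructor
  · intro hu
    apply (RelC_lower m u p ⟨hp0, hp1⟩).2
    by_contra h
    push_neg at h
    exact hu (funext fun i => by simpa using h i)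
  · intro hu
    have hp' : (1 - p) ∈ Set.Ioo (0:ℝ) 1 := ⟨by linarith, by linarith⟩
    have hdual := RelC_dual m u p
    have hlt : (1 - p) ^ (2 ^ m) < RelC m (fun i => !(u i)) (1 - p) := by
      apply (RelC_lower m (fun i => !(u i)) (1 - p) hp').2
      by_contra h
      push_neg at h
      exact hu (funext fun i => by simpa using h i)
    rw [hdual] at hlt
    linarith
end

section
/- Let m be a strictly positive integer and let p_0 ∈ (0,1). Then there is no Heaviside most reliable composition with threshold p_0: there exists no u ∈ {0,1}^m such that simultaneously Rel(C^u; p) ≤ Rel(C^v; p) for all v ∈ {0,1}^m and all p ∈ [0, p_0), and Rel(C^u; p) ≥ Rel(C^v; p) for all v ∈ {0,1}^m and all p ∈ [p_0, 1]. -/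
lemma g_bounds (b : Bool) (q : ℝ) (h0 : 0 ≤ q) (h1 : q ≤ 1) :
    q ^ 2 ≤ g b q ∧ g b q ≤ 1 - (1 - q) ^ 2 := by
  cases b <;> simp only [g, Bool.false_eq_true, ite_false, ite_true] <;>
    constructor <;> nlinarith

lemma foldr_bounds (m : ℕ) (u : Fin m → Bool) (L : List (Fin m)) (p : ℝ)
    (h0 : 0 ≤ p) (h1 : p ≤ 1) :
    p ^ (2 ^ L.length) ≤ L.foldr (fun i q => g (u i) q) p ∧
      L.foldr (fun i q => g (u i) q) p ≤ 1 - (1 - p) ^ (2 ^ L.length) := by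
  induction L with
  | nil => simp
  | cons a L ih =>
    obtain ⟨hlo, hhi⟩ := ih
    set q := L.foldr (fun i q => g (u i) q) p with hq
    have hL0 : (0:ℝ) ≤ p ^ (2 ^ L.length) := by positivity
    have hU0 : (0:ℝ) ≤ (1 - p) ^ (2 ^ L.length) := by
      apply pow_nonneg; linarith
    have hq0 : 0 ≤ q := le_trans hL0 hlo
    have hq1 : q ≤ 1 := by nlinarith
    obtain ⟨hg1, hg2⟩ := g_bounds (u a) q hq0 hq1
    have key1 : (p ^ (2 ^ L.length)) ^ 2 ≤ q ^ 2 := by nlinarith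
    have key2 : ((1 - p) ^ (2 ^ L.length)) ^ 2 ≤ (1 - q) ^ 2 := by nlinarith
    have e1 : (p ^ (2 ^ L.length)) ^ 2 = p ^ (2 ^ (L.length + 1)) := by
      rw [← pow_mul, pow_succ]
    have e2 : ((1 - p) ^ (2 ^ L.length)) ^ 2 = (1 - p) ^ (2 ^ (L.length + 1)) := by
      rw [← pow_mul, pow_succ]
    constructor
    · show p ^ (2 ^ (L.length + 1)) ≤ g (u a) q
      linarith [e1 ▸ key1]
    · show g (u a) q ≤ 1 - (1 - p) ^ (2 ^ (L.length + 1))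
      linarith [e2 ▸ key2]

lemma foldr_cont (m : ℕ) (u : Fin m → Bool) (L : List (Fin m)) :
    Continuous (fun p : ℝ => L.foldr (fun i q => g (u i) q) p) := by
  induction L with
  | nil => simpa using continuous_id'
  | cons a L ih =>
    simp only [List.foldr_cons]
    cases h : u a <;> simp only [g, h, Bool.false_eq_true, ite_false, ite_true] <;> fun_prop

lemma foldr_false (m : ℕ) (L : List (Fin m)) (p : ℝ) :
    L.foldr (fun _ q => g false q) p = p ^ (2 ^ L.length) := by
  induction L with
  | nil => simp
  | cons a L ih =>
    rw [List.foldr_cons, ih]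
    simp only [g, List.length_cons, Bool.false_eq_true, ite_false]
    rw [← pow_mul, pow_succ]

lemma foldr_true (m : ℕ) (L : List (Fin m)) (p : ℝ) :
    L.foldr (fun _ q => g true q) p = 1 - (1 - p) ^ (2 ^ L.length) := by
  induction L with
  | nil => simp
  | cons a L ih =>
    rw [List.foldr_cons, ih]
    simp only [g, List.length_cons, ite_true]
    rw [show (1 - (1 - (1 - p) ^ 2 ^ L.length)) = (1 - p) ^ 2 ^ L.length by ring,
      ← pow_mul, pow_succ]

/-- there is no Heaviside most reliable composition with threshold
`p₀ ∈ (0,1)`: no `u` is simultaneously pointwise minimal on `[0,p₀)` and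
pointwise maximal on `[p₀,1]` among all compositions of size `2^m`. -/
theorem no_heaviside_most_reliable (m : ℕ) (hm : 0 < m)
    (p₀ : ℝ) (hp₀ : p₀ ∈ Set.Ioo (0:ℝ) 1) :
    ¬ ∃ u : Fin m → Bool,
        (∀ v : Fin m → Bool, ∀ p ∈ Set.Ico (0:ℝ) p₀, RelC m u p ≤ RelC m v p) ∧
        (∀ v : Fin m → Bool, ∀ p ∈ Set.Icc p₀ (1:ℝ), RelC m v p ≤ RelC m u p) := by
  obtain ⟨hp0, hp1⟩ := hp₀
  rintro ⟨u, hmin, hmax⟩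
  have hlen : (List.finRange m).length = m := List.length_finRange
  -- On [0, p₀), RelC m u p = p ^ 2 ^ m
  have heq : Set.EqOn (RelC m u) (fun p => p ^ (2 ^ m)) (Set.Ico 0 p₀) := by
    intro p hp
    obtain ⟨h0, h1⟩ := hp
    have hb := (foldr_bounds m u (List.finRange m) p h0 (by linarith)).1
    rw [hlen] at hb
    have hle := hmin (fun _ => false) p ⟨h0, h1⟩
    have : RelC m (fun _ => false) p = p ^ (2 ^ m) := by
      rw [RelC, foldr_false, hlen]
    rw [this] at hle
    exact le_antisymm hle hb
  -- extend to p₀ by continuity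
  have hcont : Continuous (RelC m u) := foldr_cont m u (List.finRange m)
  have hcont2 : Continuous (fun p : ℝ => p ^ (2 ^ m)) := by fun_prop
  have heq' : Set.EqOn (RelC m u) (fun p => p ^ (2 ^ m)) (closure (Set.Ico 0 p₀)) :=
    heq.closure hcont hcont2
  have hcl : p₀ ∈ closure (Set.Ico (0:ℝ) p₀) := by
    rw [closure_Ico (by linarith : (0:ℝ) ≠ p₀)]
    exact ⟨le_of_lt hp0, le_refl _⟩
  have hval : RelC m u p₀ = p₀ ^ (2 ^ m) := heq' hcl
  -- maximality against all-parallel at p₀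
  have htrue : RelC m (fun _ => true) p₀ = 1 - (1 - p₀) ^ (2 ^ m) := by
    rw [RelC, foldr_true, hlen]
  have hge := hmax (fun _ => true) p₀ ⟨le_refl _, le_of_lt hp1⟩
  rw [htrue, hval] at hge
  -- contradiction: 1 - (1-p₀)^(2^m) ≥ p₀ > p₀^(2^m)
  have h2 : 1 < 2 ^ m := Nat.one_lt_two_pow hm.ne'
  have hlt : p₀ ^ (2 ^ m) < p₀ := by
    have := pow_lt_pow_right_of_lt_one₀ hp0 hp1 h2
    simpa using this
  have ha : (0:ℝ) ≤ 1 - p₀ := by linarith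
  have hb : (1:ℝ) - p₀ ≤ 1 := by linarith
  have hge2 : p₀ ≤ 1 - (1 - p₀) ^ (2 ^ m) := by
    have h3 : (1 - p₀) ^ (2 ^ m) ≤ (1 - p₀) ^ 1 :=
      pow_le_pow_of_le_one ha hb (le_of_lt h2)
    rw [pow_one] at h3
    linarith
  linarith
end
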